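/- arXiv:2411.00979 — 7 statements merged into one kernel-verified Lean document; each statement's English description precedes it below -/
import Mathlib

section
/- Let ‖·‖ be a norm on ℝ^d, let g : ℝ^d → ℝ ∪ {+∞} be proper, convex, lower semicontinuous and γ-strongly convex with respect to ‖·‖ (γ ≥ 0), let h : ℝ^d → ℝ be differentiable and 1-strongly convex with respect to ‖·‖ with Bregman divergence D(x,y) = h(x) − h(y) − ⟨∇h(y), x−y⟩, and let F : ℝ^d → ℝ^d be monotone. Fix x_0 ∈ dom(g), positive step sizes a_1,…,a_K with conventions a_0 = A_0 = 0 and A_k = Σ_{i=1}^k a_i, and arbitrary vectors F̂_1,…,F̂_K ∈ ℝ^d. For 1 ≤ k ≤ K let x_k be the (unique) minimizer over u ∈ ℝ^d of Σ_{i=1}^k a_i (⟨F̂_i, u⟩ + g(u)) + D(u, x_0), and let x̄_k = (1/A_k) Σ_{i=1}^k a_i x_i. Then for every 1 ≤ k ≤ K and every x ∈ dom(g): Gap(x̄_k, x) ≤ ( Σ_{i=1}^k E_i + D(x, x_0) − ((A_k γ + 1)/2) ‖x − x_k‖² ) / A_k, where E_i := a_i ⟨F(x_i) − F̂_i, x_i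 − x⟩ − ((A_{i−1} γ + 1)/2) ‖x_i − x_{i−1}‖². -/
open MeasureTheory Finset
open scoped BigOperators RealInnerProductSpace

set_option maxHeartbeats 1000000

noncomputable section

/-- Generic gap bound (Lemma 3.1 of the paper): for dual-averaging iterates x_k
driven by arbitrary extrapolated operators F̂_i, the gap of the averaged iterate
x̄_k is controlled by the error terms E_i, the initial Bregman divergence and a
negative quadratic term. Here g takes values in EReal, dom(g) = {x | g x ≠ ⊤},
D(u, v) = h(u) − h(v) − ⟪∇h(v), u − v⟫, A_k = Σ_{i=1}^k a_i and
Gap(x', x) = ⟪F(x), x' − x⟫ − g(x) + g(x'). -/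
theorem stmt2
    (d : ℕ)
    (nrm : EuclideanSpace ℝ (Fin d) → ℝ)
    (hnrm_nonneg : ∀ x, 0 ≤ nrm x)
    (hnrm_zero : ∀ x, nrm x = 0 ↔ x = 0)
    (hnrm_add : ∀ x y, nrm (x + y) ≤ nrm x + nrm y)
    (hnrm_smul : ∀ (c : ℝ) x, nrm (c • x) = |c| * nrm x)
    (γ : ℝ) (hγ : 0 ≤ γ)
    (g : EuclideanSpace ℝ (Fin d) → EReal)
    (hg_ne_bot : ∀ x, g x ≠ ⊥)
    (hg_proper : ∃ x, g x ≠ ⊤)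
    (hg_lsc : LowerSemicontinuous g)
    (hg_sconv : ∀ x y : EuclideanSpace ℝ (Fin d), ∀ t : ℝ, t ∈ Set.Icc (0 : ℝ) 1 →
      g (t • x + (1 - t) • y) ≤ (t : EReal) * g x + ((1 - t : ℝ) : EReal) * g y
        - (((γ / 2) * t * (1 - t) * (nrm (x - y)) ^ 2 : ℝ) : EReal))
    (h : EuclideanSpace ℝ (Fin d) → ℝ)
    (h' : EuclideanSpace ℝ (Fin d) → EuclideanSpace ℝ (Fin d))
    (hh_diff : ∀ x, HasGradientAt h (h' x) x)
    (hh_sconv : ∀ x y : EuclideanSpace ℝ (Fin d), ∀ t : ℝ, t ∈ Set.Icc (0 : ℝ) 1 →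
      h (t • x + (1 - t) • y) ≤
        t * h x + (1 - t) * h y - (1 / 2) * t * (1 - t) * (nrm (x - y)) ^ 2)
    (F : EuclideanSpace ℝ (Fin d) → EuclideanSpace ℝ (Fin d))
    (hF_mono : ∀ x y, 0 ≤ ⟪F x - F y, x - y⟫)
    (K : ℕ) (hK : 1 ≤ K)
    (x0 : EuclideanSpace ℝ (Fin d)) (hx0_dom : g x0 ≠ ⊤)
    (a : ℕ → ℝ) (ha0 : a 0 = 0) (ha_pos : ∀ i, 1 ≤ i → i ≤ K → 0 < a i)
    (Fhat : ℕ → EuclideanSpace ℝ (Fin d))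
    (xseq : ℕ → EuclideanSpace ℝ (Fin d)) (hxseq0 : xseq 0 = x0)
    (hx_dom : ∀ k, k ≤ K → g (xseq k) ≠ ⊤)
    (hx_min : ∀ k, 1 ≤ k → k ≤ K → ∀ u,
      ((∑ i ∈ Finset.Icc 1 k, a i * ⟪Fhat i, xseq k⟫
          + (h (xseq k) - h x0 - ⟪h' x0, xseq k - x0⟫) : ℝ) : EReal)
        + ((∑ i ∈ Finset.Icc 1 k, a i : ℝ) : EReal) * g (xseq k)
      ≤ ((∑ i ∈ Finset.Icc 1 k, a i * ⟪Fhat i, u⟫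
          + (h u - h x0 - ⟪h' x0, u - x0⟫) : ℝ) : EReal)
        + ((∑ i ∈ Finset.Icc 1 k, a i : ℝ) : EReal) * g u) :
    ∀ k, 1 ≤ k → k ≤ K → ∀ x, g x ≠ ⊤ →
      ⟪F x, ((∑ i ∈ Finset.Icc 1 k, a i)⁻¹) • (∑ i ∈ Finset.Icc 1 k, a i • xseq i) - x⟫
          - (g x).toReal
          + (g (((∑ i ∈ Finset.Icc 1 k, a i)⁻¹) • (∑ i ∈ Finset.Icc 1 k, a i • xseq i))).toReal
        ≤ ((∑ i ∈ Finset.Icc 1 k,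
              (a i * ⟪F (xseq i) - Fhat i, xseq i - x⟫
                - (((∑ i' ∈ Finset.Icc 1 (i - 1), a i') * γ + 1) / 2)
                    * (nrm (xseq i - xseq (i - 1))) ^ 2))
            + (h x - h x0 - ⟪h' x0, x - x0⟫)
            - (((∑ i ∈ Finset.Icc 1 k, a i) * γ + 1) / 2) * (nrm (x - xseq k)) ^ 2)
          / (∑ i ∈ Finset.Icc 1 k, a i) := by
  -- notation-free helper facts
  have hApos : ∀ n, 1 ≤ n → n ≤ K → 0 < ∑ i ∈ Finset.Icc 1 n, a i := by
    intro n h1 h2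
    apply Finset.sum_pos
    · intro i hi
      exact ha_pos i (Finset.mem_Icc.mp hi).1 (le_trans (Finset.mem_Icc.mp hi).2 h2)
    · exact ⟨1, Finset.mem_Icc.mpr ⟨le_refl 1, h1⟩⟩
  have hAnonneg : ∀ n, n ≤ K → 0 ≤ ∑ i ∈ Finset.Icc 1 n, a i := by
    intro n h2
    apply Finset.sum_nonneg
    intro i hi
    exact (ha_pos i (Finset.mem_Icc.mp hi).1 (le_trans (Finset.mem_Icc.mp hi).2 h2)).le
  -- D lower bound : (1/2)‖u - x0‖² ≤ D u
  have hDlb : ∀ u, (1/2) * (nrm (u - x0))^2 ≤ h u - h x0 - ⟪h' x0, u - x0⟫ := by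
    intro u
    have line : HasDerivAt (fun t : ℝ => x0 + t • (u - x0)) (u - x0) 0 := by
      simpa using ((hasDerivAt_id (0:ℝ)).smul_const (u - x0)).const_add x0
    have h2 : HasFDerivAt h ((InnerProductSpace.toDual ℝ (EuclideanSpace ℝ (Fin d))) (h' x0))
        (x0 + (0:ℝ) • (u - x0)) := by simpa using (hh_diff x0).hasFDerivAt
    have hder : HasDerivAt (fun t : ℝ => h (x0 + t • (u - x0))) ⟪h' x0, u - x0⟫ 0 := by
      have := h2.comp_hasDerivAt 0 line
      simp [real_inner_comm] at this
      exact this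
    have hslope : Filter.Tendsto (slope (fun t : ℝ => h (x0 + t • (u - x0))) 0) (nhdsWithin 0 (Set.Ioi 0))
        (nhds ⟪h' x0, u - x0⟫) :=
      (hasDerivAt_iff_tendsto_slope.mp hder).mono_left
        (nhdsWithin_mono 0 (fun t ht => ne_of_gt ht))
    have hrhs : Filter.Tendsto (fun t : ℝ => h u - h x0 - (1/2) * (1 - t) * (nrm (u - x0))^2)
        (nhdsWithin (0:ℝ) (Set.Ioi 0)) (nhds (h u - h x0 - (1/2) * (nrm (u - x0))^2)) := by
      have hc : ContinuousAt (fun t : ℝ => h u - h x0 - (1/2) * (1 - t) * (nrm (u - x0))^2) 0 := by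
        fun_prop
      simpa using hc.continuousWithinAt.tendsto
    have hev : ∀ᶠ t in nhdsWithin (0:ℝ) (Set.Ioi 0), slope (fun t : ℝ => h (x0 + t • (u - x0))) 0 t
        ≤ h u - h x0 - (1/2) * (1 - t) * (nrm (u - x0))^2 := by
      filter_upwards [Ioo_mem_nhdsGT_of_mem (by norm_num : (0:ℝ) ∈ Set.Ico 0 1)] with t ht
      have key := hh_sconv u x0 t ⟨le_of_lt ht.1, le_of_lt ht.2⟩
      have heq : x0 + t • (u - x0) = t • u + (1 - t) • x0 := by module
      rw [slope_def_field, heq]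
      simp only [zero_smul, add_zero, sub_zero]
      rw [div_le_iff₀ ht.1]
      nlinarith [key]
    have hfin := le_of_tendsto_of_tendsto hslope hrhs hev
    linarith [hfin]
  -- D x0 = 0
  have hD0 : h x0 - h x0 - ⟪h' x0, x0 - x0⟫ = 0 := by
    simp
  -- finite values of g
  have hGcoe : ∀ u : EuclideanSpace ℝ (Fin d), g u ≠ ⊤ → g u = ((g u).toReal : EReal) :=
    fun u hu => (EReal.coe_toReal hu (hg_ne_bot u)).symm
  -- linearity of the linear part
  have hLlin : ∀ (n : ℕ) (t : ℝ) (u v : EuclideanSpace ℝ (Fin d)),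
      ∑ i ∈ Finset.Icc 1 n, a i * ⟪Fhat i, t • u + (1 - t) • v⟫
        = t * ∑ i ∈ Finset.Icc 1 n, a i * ⟪Fhat i, u⟫
          + (1 - t) * ∑ i ∈ Finset.Icc 1 n, a i * ⟪Fhat i, v⟫ := by
    intro n t u v
    rw [Finset.mul_sum, Finset.mul_sum, ← Finset.sum_add_distrib]
    refine Finset.sum_congr rfl fun i _ => ?_
    rw [inner_add_right, real_inner_smul_right, real_inner_smul_right]; ring
  -- convexity of D with strong modulus
  have hDconv : ∀ (u v : EuclideanSpace ℝ (Fin d)) (t : ℝ), t ∈ Set.Icc (0:ℝ) 1 →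
      h (t • u + (1 - t) • v) - h x0 - ⟪h' x0, (t • u + (1 - t) • v) - x0⟫
        ≤ t * (h u - h x0 - ⟪h' x0, u - x0⟫) + (1 - t) * (h v - h x0 - ⟪h' x0, v - x0⟫)
          - (1/2) * t * (1 - t) * (nrm (u - v))^2 := by
    intro u v t ht
    have h1 := hh_sconv u v t ht
    have h2 : (t • u + (1 - t) • v) - x0 = t • (u - x0) + (1 - t) • (v - x0) := by module
    rw [h2, inner_add_right, real_inner_smul_right, real_inner_smul_right]
    nlinarith [h1]
  -- Step 1 : minimizer + strong convexity
  have step1 : ∀ n, n ≤ K → ∀ u, g u ≠ ⊤ →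
      (∑ i ∈ Finset.Icc 1 n, a i * ⟪Fhat i, xseq n⟫)
        + (h (xseq n) - h x0 - ⟪h' x0, xseq n - x0⟫)
        + (∑ i ∈ Finset.Icc 1 n, a i) * (g (xseq n)).toReal
        + (((∑ i ∈ Finset.Icc 1 n, a i) * γ + 1)/2) * (nrm (u - xseq n))^2
      ≤ (∑ i ∈ Finset.Icc 1 n, a i * ⟪Fhat i, u⟫)
        + (h u - h x0 - ⟪h' x0, u - x0⟫)
        + (∑ i ∈ Finset.Icc 1 n, a i) * (g u).toReal := by
    intro n hnK u hu
    rcases Nat.eq_zero_or_pos n with hn0 | hn1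
    · subst hn0
      simp only [Finset.Icc_eq_empty_of_lt (by norm_num : (0:ℕ) < 1), Finset.sum_empty,
        hxseq0, hD0, zero_mul, add_zero, zero_add]
      have := hDlb u
      nlinarith [this]
    · -- n ≥ 1
      set A := ∑ i ∈ Finset.Icc 1 n, a i with hAdef
      have hA : 0 < A := hApos n hn1 hnK
      set v := xseq n with hvdef
      have hgv : g v = ((g v).toReal : EReal) := hGcoe v (hx_dom n hnK)
      have hgu : g u = ((g u).toReal : EReal) := hGcoe u hu
      set Gv := (g v).toReal
      set Gu := (g u).toReal
      set Lv := ∑ i ∈ Finset.Icc 1 n, a i * ⟪Fhat i, v⟫ with hLv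
      set Lu := ∑ i ∈ Finset.Icc 1 n, a i * ⟪Fhat i, u⟫ with hLu
      set Dv := h v - h x0 - ⟪h' x0, v - x0⟫ with hDv
      set Du := h u - h x0 - ⟪h' x0, u - x0⟫ with hDu
      set N := (nrm (u - v))^2 with hN
      have hNnn : 0 ≤ N := by positivity
      set P := Lv + Dv + A * Gv with hP
      set Q := Lu + Du + A * Gu with hQ
      set c := ((A * γ + 1)/2) * N with hc
      have hper : ∀ t ∈ Set.Ioo (0:ℝ) 1, P ≤ Q - c * (1 - t) := by
        intro t ht
        have htIcc : t ∈ Set.Icc (0:ℝ) 1 := ⟨ht.1.le, ht.2.le⟩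
        set z := t • u + (1 - t) • v with hz
        -- bound g z
        have hgz := hg_sconv u v t htIcc
        rw [hgu, hgv] at hgz
        have hcast : ((t : ℝ) : EReal) * ((Gu : ℝ) : EReal) + ((1 - t : ℝ) : EReal) * ((Gv : ℝ) : EReal)
            - (((γ / 2) * t * (1 - t) * (nrm (u - v)) ^ 2 : ℝ) : EReal)
            = ((t * Gu + (1 - t) * Gv - (γ / 2) * t * (1 - t) * (nrm (u - v)) ^ 2 : ℝ) : EReal) := by
          norm_cast
        rw [hcast] at hgz
        have hgztop : g z ≠ ⊤ := (lt_of_le_of_lt hgz (EReal.coe_lt_top _)).ne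
        have hgzc : g z = ((g z).toReal : EReal) := hGcoe z hgztop
        set Gz := (g z).toReal with hGz
        rw [hgzc] at hgz
        have hgzR : Gz ≤ t * Gu + (1 - t) * Gv - (γ / 2) * t * (1 - t) * N := by
          exact_mod_cast hgz
        -- minimality
        have hmin := hx_min n hn1 hnK z
        rw [← hvdef, ← hAdef, ← hLv, ← hDv, hgv, hgzc] at hmin
        have hminR : Lv + Dv + A * Gv ≤ (∑ i ∈ Finset.Icc 1 n, a i * ⟪Fhat i, z⟫)
            + (h z - h x0 - ⟪h' x0, z - x0⟫) + A * Gz := by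
          have := hmin
          push_cast at this
          exact_mod_cast this
        -- linear part and D part at z
        have hLz : (∑ i ∈ Finset.Icc 1 n, a i * ⟪Fhat i, z⟫) = t * Lu + (1 - t) * Lv := by
          rw [hz]; exact hLlin n t u v
        have hDz : h z - h x0 - ⟪h' x0, z - x0⟫ ≤ t * Du + (1 - t) * Dv - (1/2) * t * (1 - t) * N := by
          rw [hz, hDu, hDv, hN]; exact hDconv u v t htIcc
        have hAGz : A * Gz ≤ A * (t * Gu + (1 - t) * Gv - (γ / 2) * t * (1 - t) * N) :=
          mul_le_mul_of_nonneg_left hgzR hA.le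
        have h1 : P ≤ t * Q + (1 - t) * P - ((A * γ + 1)/2) * t * (1 - t) * N := by
          rw [hP, hQ]
          linarith [hminR, hLz, hDz, hAGz]
        have h2 : t * (P - (Q - c * (1 - t))) ≤ 0 := by
          rw [hc]; linarith [h1]
        nlinarith [h2, ht.1]
      have htend : Filter.Tendsto (fun t : ℝ => Q - c * (1 - t)) (nhdsWithin (0:ℝ) (Set.Ioi 0))
          (nhds (Q - c)) := by
        have hcont : ContinuousAt (fun t : ℝ => Q - c * (1 - t)) 0 := by fun_prop
        simpa using hcont.continuousWithinAt.tendsto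
      have hev : ∀ᶠ t in nhdsWithin (0:ℝ) (Set.Ioi 0), P ≤ Q - c * (1 - t) := by
        filter_upwards [Ioo_mem_nhdsGT_of_mem (by norm_num : (0:ℝ) ∈ Set.Ico 0 1)] with t ht
        exact hper t ht
      have := ge_of_tendsto htend hev
      linarith [this, hc.symm.le, hc.le]
  -- telescoping
  have tele : ∀ n, n ≤ K →
      (∑ i ∈ Finset.Icc 1 n,
          (a i * (⟪Fhat i, xseq i⟫ + (g (xseq i)).toReal)
            + (((∑ i' ∈ Finset.Icc 1 (i - 1), a i') * γ + 1) / 2)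
                * (nrm (xseq i - xseq (i - 1)))^2))
      ≤ (∑ i ∈ Finset.Icc 1 n, a i * ⟪Fhat i, xseq n⟫)
          + (h (xseq n) - h x0 - ⟪h' x0, xseq n - x0⟫)
          + (∑ i ∈ Finset.Icc 1 n, a i) * (g (xseq n)).toReal := by
    intro n
    induction n with
    | zero =>
      intro _
      simp [Finset.Icc_eq_empty_of_lt (by norm_num : (0:ℕ) < 1), hxseq0, hD0]
    | succ m ih =>
      intro hmK
      have hmK' : m ≤ K := Nat.le_of_succ_le hmK
      have hIH := ih hmK'
      have hstep := step1 m hmK' (xseq (m+1)) (hx_dom (m+1) hmK)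
      have hsplitSum : ∑ i ∈ Finset.Icc 1 (m+1),
            (a i * (⟪Fhat i, xseq i⟫ + (g (xseq i)).toReal)
              + (((∑ i' ∈ Finset.Icc 1 (i - 1), a i') * γ + 1) / 2)
                  * (nrm (xseq i - xseq (i - 1)))^2)
          = (∑ i ∈ Finset.Icc 1 m,
              (a i * (⟪Fhat i, xseq i⟫ + (g (xseq i)).toReal)
                + (((∑ i' ∈ Finset.Icc 1 (i - 1), a i') * γ + 1) / 2)
                    * (nrm (xseq i - xseq (i - 1)))^2))
            + (a (m+1) * (⟪Fhat (m+1), xseq (m+1)⟫ + (g (xseq (m+1))).toReal)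
              + (((∑ i' ∈ Finset.Icc 1 m, a i') * γ + 1) / 2)
                  * (nrm (xseq (m+1) - xseq m))^2) := by
        rw [Finset.sum_Icc_succ_top (by omega : 1 ≤ m+1)]
        simp
      have hsplitL : ∑ i ∈ Finset.Icc 1 (m+1), a i * ⟪Fhat i, xseq (m+1)⟫
          = (∑ i ∈ Finset.Icc 1 m, a i * ⟪Fhat i, xseq (m+1)⟫)
            + a (m+1) * ⟪Fhat (m+1), xseq (m+1)⟫ :=
        Finset.sum_Icc_succ_top (by omega : 1 ≤ m+1) _
      have hsplitA : ∑ i ∈ Finset.Icc 1 (m+1), a i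
          = (∑ i ∈ Finset.Icc 1 m, a i) + a (m+1) :=
        Finset.sum_Icc_succ_top (by omega : 1 ≤ m+1) _
      rw [hsplitSum, hsplitL, hsplitA]
      linarith [hIH, hstep]
  -- Jensen
  have jensen : ∀ n, 1 ≤ n → n ≤ K →
      g ((∑ i ∈ Finset.Icc 1 n, a i)⁻¹ • ∑ i ∈ Finset.Icc 1 n, a i • xseq i)
        ≤ (((∑ i ∈ Finset.Icc 1 n, a i * (g (xseq i)).toReal)
              / (∑ i ∈ Finset.Icc 1 n, a i) : ℝ) : EReal) := by
    intro n hn1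
    induction n, hn1 using Nat.le_induction with
    | base =>
      intro h1K
      have ha1 := ha_pos 1 le_rfl h1K
      rw [Finset.Icc_self, Finset.sum_singleton, Finset.sum_singleton, Finset.sum_singleton]
      rw [smul_smul, inv_mul_cancel₀ (ne_of_gt ha1), one_smul]
      have heq : a 1 * (g (xseq 1)).toReal / a 1 = (g (xseq 1)).toReal := by
        field_simp
      rw [heq]
      exact le_of_eq (hGcoe (xseq 1) (hx_dom 1 h1K))
    | succ m hm ih =>
      intro hmK
      have hmK' : m ≤ K := Nat.le_of_succ_le hmK
      have hIH := ih hmK'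
      have hAm := hApos m hm hmK'
      have ham1 := ha_pos (m+1) (by omega) hmK
      have hAm1 : (0:ℝ) < ∑ i ∈ Finset.Icc 1 (m+1), a i := hApos (m+1) (by omega) hmK
      set Am := ∑ i ∈ Finset.Icc 1 m, a i with hAmdef
      set Am1 := ∑ i ∈ Finset.Icc 1 (m+1), a i with hAm1def
      have hsplitA : Am1 = Am + a (m+1) := Finset.sum_Icc_succ_top (by omega : 1 ≤ m+1) _
      set t := a (m+1) / Am1 with htdef
      have ht0 : 0 < t := div_pos ham1 hAm1
      have ht1 : t < 1 := by
        rw [htdef, div_lt_one hAm1]; linarith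
      set S := ∑ i ∈ Finset.Icc 1 m, a i • xseq i with hSdef
      have h1t : 1 - t = Am / Am1 := by
        rw [htdef]
        field_simp
        linarith [hsplitA]
      have hs1 : (1 - t) * Am⁻¹ = Am1⁻¹ := by
        rw [h1t]; field_simp
      have hs2 : Am1⁻¹ * a (m+1) = t := by
        rw [htdef]; ring
      have hvec : Am1⁻¹ • (∑ i ∈ Finset.Icc 1 (m+1), a i • xseq i)
          = t • xseq (m+1) + (1 - t) • (Am⁻¹ • S) := by
        rw [Finset.sum_Icc_succ_top (by omega : 1 ≤ m+1)]
        rw [smul_add, smul_smul, hs2, smul_smul, hs1, add_comm]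
      rw [hvec]
      -- bound the old average
      have hytop : g (Am⁻¹ • S) ≠ ⊤ := (lt_of_le_of_lt hIH (EReal.coe_lt_top _)).ne
      have hyc : g (Am⁻¹ • S) = (((g (Am⁻¹ • S)).toReal : ℝ) : EReal) := hGcoe _ hytop
      set r := (g (Am⁻¹ • S)).toReal with hrdef
      have hr : r ≤ (∑ i ∈ Finset.Icc 1 m, a i * (g (xseq i)).toReal) / Am := by
        rw [hyc] at hIH; exact_mod_cast hIH
      have hgm1 : g (xseq (m+1)) = (((g (xseq (m+1))).toReal : ℝ) : EReal) :=
        hGcoe _ (hx_dom (m+1) hmK)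
      set G1 := (g (xseq (m+1))).toReal with hG1def
      have hconv := hg_sconv (xseq (m+1)) (Am⁻¹ • S) t ⟨ht0.le, ht1.le⟩
      rw [hgm1, hyc] at hconv
      have hcast : ((t : ℝ) : EReal) * ((G1 : ℝ) : EReal) + ((1 - t : ℝ) : EReal) * ((r : ℝ) : EReal)
          - (((γ / 2) * t * (1 - t) * (nrm (xseq (m+1) - Am⁻¹ • S)) ^ 2 : ℝ) : EReal)
          = ((t * G1 + (1 - t) * r - (γ / 2) * t * (1 - t) * (nrm (xseq (m+1) - Am⁻¹ • S)) ^ 2 : ℝ)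
              : EReal) := by
        norm_cast
      rw [hcast] at hconv
      refine le_trans hconv ?_
      rw [EReal.coe_le_coe_iff]
      have hBsum : ∑ i ∈ Finset.Icc 1 (m+1), a i * (g (xseq i)).toReal
          = (∑ i ∈ Finset.Icc 1 m, a i * (g (xseq i)).toReal) + a (m+1) * G1 :=
        Finset.sum_Icc_succ_top (by omega : 1 ≤ m+1) _
      have hkey : t * G1 + (1 - t) * ((∑ i ∈ Finset.Icc 1 m, a i * (g (xseq i)).toReal) / Am)
          = (∑ i ∈ Finset.Icc 1 (m+1), a i * (g (xseq i)).toReal) / Am1 := by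
        rw [hBsum, h1t, htdef]
        field_simp
        ring
      have hmul : (1 - t) * r ≤ (1 - t) * ((∑ i ∈ Finset.Icc 1 m, a i * (g (xseq i)).toReal) / Am) :=
        mul_le_mul_of_nonneg_left hr (by linarith)
      have hcnn : 0 ≤ (γ / 2) * t * (1 - t) * (nrm (xseq (m+1) - Am⁻¹ • S)) ^ 2 :=
        mul_nonneg (mul_nonneg (mul_nonneg (by linarith) ht0.le) (by linarith))
          (pow_nonneg (hnrm_nonneg _) 2)
      linarith [hkey, hmul, hcnn]
  -- final assembly
  intro k hk1 hkK x hx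
  have hAk : 0 < ∑ i ∈ Finset.Icc 1 k, a i := hApos k hk1 hkK
  have htele := tele k hkK
  have hstep := step1 k hkK x hx
  have hjen := jensen k hk1 hkK
  have hmonoSum : ∑ i ∈ Finset.Icc 1 k, a i * ⟪F x, xseq i - x⟫
      ≤ (∑ i ∈ Finset.Icc 1 k, a i * ⟪Fhat i, xseq i⟫)
        - (∑ i ∈ Finset.Icc 1 k, a i * ⟪Fhat i, x⟫)
        + ∑ i ∈ Finset.Icc 1 k, a i * ⟪F (xseq i) - Fhat i, xseq i - x⟫ := by
    rw [← Finset.sum_sub_distrib, ← Finset.sum_add_distrib]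
    refine Finset.sum_le_sum fun i hi => ?_
    have hai := (ha_pos i (Finset.mem_Icc.mp hi).1
      (le_trans (Finset.mem_Icc.mp hi).2 hkK)).le
    have hmono := hF_mono (xseq i) x
    rw [inner_sub_left] at hmono
    have h1 : ⟪F x, xseq i - x⟫ ≤ ⟪F (xseq i), xseq i - x⟫ := by linarith
    have h3 : ⟪F (xseq i), xseq i - x⟫
        = ⟪Fhat i, xseq i⟫ - ⟪Fhat i, x⟫ + ⟪F (xseq i) - Fhat i, xseq i - x⟫ := by
      simp only [inner_sub_left, inner_sub_right]; ring
    calc a i * ⟪F x, xseq i - x⟫ ≤ a i * ⟪F (xseq i), xseq i - x⟫ :=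
          mul_le_mul_of_nonneg_left h1 hai
      _ = a i * ⟪Fhat i, xseq i⟫ - a i * ⟪Fhat i, x⟫
            + a i * ⟪F (xseq i) - Fhat i, xseq i - x⟫ := by rw [h3]; ring
  have e1 : ∑ i ∈ Finset.Icc 1 k, (a i * (⟪Fhat i, xseq i⟫ + (g (xseq i)).toReal)
        + (((∑ i' ∈ Finset.Icc 1 (i - 1), a i') * γ + 1) / 2)
            * (nrm (xseq i - xseq (i - 1)))^2)
      = (∑ i ∈ Finset.Icc 1 k, a i * ⟪Fhat i, xseq i⟫)
        + (∑ i ∈ Finset.Icc 1 k, a i * (g (xseq i)).toReal)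
        + ∑ i ∈ Finset.Icc 1 k, (((∑ i' ∈ Finset.Icc 1 (i - 1), a i') * γ + 1) / 2)
            * (nrm (xseq i - xseq (i - 1)))^2 := by
    rw [← Finset.sum_add_distrib, ← Finset.sum_add_distrib]
    exact Finset.sum_congr rfl fun i _ => by ring
  have e2 : ∑ i ∈ Finset.Icc 1 k, (a i * ⟪F (xseq i) - Fhat i, xseq i - x⟫
        - (((∑ i' ∈ Finset.Icc 1 (i - 1), a i') * γ + 1) / 2)
            * (nrm (xseq i - xseq (i - 1)))^2)
      = (∑ i ∈ Finset.Icc 1 k, a i * ⟪F (xseq i) - Fhat i, xseq i - x⟫)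
        - ∑ i ∈ Finset.Icc 1 k, (((∑ i' ∈ Finset.Icc 1 (i - 1), a i') * γ + 1) / 2)
            * (nrm (xseq i - xseq (i - 1)))^2 :=
    Finset.sum_sub_distrib _ _
  have hsumvec : ∑ i ∈ Finset.Icc 1 k, a i • (xseq i - x)
      = (∑ i ∈ Finset.Icc 1 k, a i • xseq i) - (∑ i ∈ Finset.Icc 1 k, a i) • x := by
    simp only [smul_sub]
    rw [Finset.sum_sub_distrib, ← Finset.sum_smul]
  have hvec : (∑ i ∈ Finset.Icc 1 k, a i)⁻¹ • (∑ i ∈ Finset.Icc 1 k, a i • xseq i) - x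
      = (∑ i ∈ Finset.Icc 1 k, a i)⁻¹ • ∑ i ∈ Finset.Icc 1 k, a i • (xseq i - x) := by
    rw [hsumvec, smul_sub, smul_smul, inv_mul_cancel₀ (ne_of_gt hAk), one_smul]
  have hinner : ⟪F x, (∑ i ∈ Finset.Icc 1 k, a i)⁻¹ • (∑ i ∈ Finset.Icc 1 k, a i • xseq i) - x⟫
      = (∑ i ∈ Finset.Icc 1 k, a i)⁻¹ * ∑ i ∈ Finset.Icc 1 k, a i * ⟪F x, xseq i - x⟫ := by
    rw [hvec, real_inner_smul_right, inner_sum]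
    congr 1
    exact Finset.sum_congr rfl fun i _ => real_inner_smul_right _ _ _
  have hGbar : (g ((∑ i ∈ Finset.Icc 1 k, a i)⁻¹ • ∑ i ∈ Finset.Icc 1 k, a i • xseq i)).toReal
      ≤ (∑ i ∈ Finset.Icc 1 k, a i * (g (xseq i)).toReal) / (∑ i ∈ Finset.Icc 1 k, a i) := by
    have := EReal.toReal_le_toReal hjen (hg_ne_bot _) (EReal.coe_ne_top _)
    simpa using this
  rw [le_div_iff₀ hAk]
  have f1 : ⟪F x, (∑ i ∈ Finset.Icc 1 k, a i)⁻¹ • (∑ i ∈ Finset.Icc 1 k, a i • xseq i) - x⟫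
        * (∑ i ∈ Finset.Icc 1 k, a i)
      = ∑ i ∈ Finset.Icc 1 k, a i * ⟪F x, xseq i - x⟫ := by
    rw [hinner]; field_simp
  have f2 : (g ((∑ i ∈ Finset.Icc 1 k, a i)⁻¹ • ∑ i ∈ Finset.Icc 1 k, a i • xseq i)).toReal
        * (∑ i ∈ Finset.Icc 1 k, a i)
      ≤ ∑ i ∈ Finset.Icc 1 k, a i * (g (xseq i)).toReal := by
    calc (g ((∑ i ∈ Finset.Icc 1 k, a i)⁻¹ • ∑ i ∈ Finset.Icc 1 k, a i • xseq i)).toReal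
          * (∑ i ∈ Finset.Icc 1 k, a i)
        ≤ ((∑ i ∈ Finset.Icc 1 k, a i * (g (xseq i)).toReal) / (∑ i ∈ Finset.Icc 1 k, a i))
            * (∑ i ∈ Finset.Icc 1 k, a i) := mul_le_mul_of_nonneg_right hGbar hAk.le
      _ = ∑ i ∈ Finset.Icc 1 k, a i * (g (xseq i)).toReal := by field_simp
  linarith [htele, hstep, e1, e2, f1, f2, hmonoSum]

end
end

section
/- Let (Ω, 𝔽, P) be a probability space with a filtration (H_i)_{i≥0}, let V be a finite-dimensional real normed vector space, and let q ∈ (0, 1]. Let Y_0, Y_1, …, Y_K be square-integrable V-valued random vectors with Y_i measurable with respect to H_i for each i. Let ξ_1, …, ξ_K be {0,1}-valued random variables with P(ξ_i = 1) = q, such that ξ_i is independent of H_i and ξ_i is H_{i+1}-measurable. Define Z_0 = Y_0 and, for i ≥ 1, Z_i = Y_i if ξ_i = 1 and Z_i = Z_{i−1} otherwise. Then for every 1 ≤ i ≤ K: E[‖Y_i − Z_{i−1}‖²] ≤ (5/q) Σ_{i'=1}^{i} (1 − q/2)^{i − i'} E[‖Y_{i'} − Y_{i'−1}‖²]. -/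
open MeasureTheory ProbabilityTheory

noncomputable section

/-- Variance bound for the lazily refreshed operator estimates of the Randomized
Extrapolated Method: the discrepancy between the current value and the stored
estimate is controlled by a geometrically weighted sum of one-step differences. -/
theorem stmt3 {Ω : Type*} (m0 : MeasurableSpace Ω) (μ : Measure Ω) [IsProbabilityMeasure μ]
    (H : Filtration ℕ m0)
    (V : Type*) [NormedAddCommGroup V] [NormedSpace ℝ V] [FiniteDimensional ℝ V]
    [MeasurableSpace V] [BorelSpace V]
    (q : ℝ) (hq : q ∈ Set.Ioc (0 : ℝ) 1)
    (K : ℕ) (Y : ℕ → Ω → V)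
    (hY_meas : ∀ i, i ≤ K → Measurable[H i] (Y i))
    (hY_L2 : ∀ i, i ≤ K → MemLp (Y i) 2 μ)
    (ξ : ℕ → Ω → Bool)
    (hξ_law : ∀ i, 1 ≤ i → i ≤ K → μ {ω | ξ i ω = true} = ENNReal.ofReal q)
    (hξ_indep : ∀ i, 1 ≤ i → i ≤ K → Indep (MeasurableSpace.comap (ξ i) ⊤) (H i) μ)
    (hξ_meas : ∀ i, 1 ≤ i → i ≤ K → Measurable[H (i + 1)] (ξ i))
    (Z : ℕ → Ω → V) (hZ0 : Z 0 = Y 0)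
    (hZ : ∀ i, 1 ≤ i → i ≤ K → ∀ ω, Z i ω = if ξ i ω = true then Y i ω else Z (i - 1) ω) :
    ∀ i, 1 ≤ i → i ≤ K →
      ∫ ω, ‖Y i ω - Z (i - 1) ω‖ ^ 2 ∂μ ≤
        (5 / q) * ∑ i' ∈ Finset.Icc 1 i,
          (1 - q / 2) ^ (i - i') * ∫ ω, ‖Y i' ω - Y (i' - 1) ω‖ ^ 2 ∂μ := by
  obtain ⟨hq0, hq1⟩ := hq
  -- measurability of Z
  have hZmeas : ∀ i, i ≤ K → Measurable[H (i + 1)] (Z i) := by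
    intro i
    induction i with
    | zero =>
      intro _
      rw [hZ0]
      exact (hY_meas 0 (Nat.zero_le K)).mono (H.mono (Nat.zero_le 1)) le_rfl
    | succ n ih =>
      intro hi
      have hn : n ≤ K := Nat.le_of_succ_le hi
      have h1 : (1 : ℕ) ≤ n + 1 := Nat.le_add_left 1 n
      have heq : Z (n + 1) = fun ω => if ξ (n + 1) ω = true then Y (n + 1) ω else Z n ω := by
        funext ω
        rw [hZ (n + 1) h1 hi ω]
        simp
      rw [heq]
      exact Measurable.ite ((hξ_meas (n + 1) h1 hi) (measurableSet_singleton true))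
        ((hY_meas (n + 1) hi).mono (H.mono (Nat.le_succ _)) le_rfl)
        ((ih hn).mono (H.mono (Nat.le_succ _)) le_rfl)
  -- L² bound for Z
  have hZL2 : ∀ i, i ≤ K → MemLp (Z i) 2 μ := by
    intro i
    induction i with
    | zero => intro _; rw [hZ0]; exact hY_L2 0 (Nat.zero_le K)
    | succ n ih =>
      intro hi
      have hn : n ≤ K := Nat.le_of_succ_le hi
      have h1 : (1 : ℕ) ≤ n + 1 := Nat.le_add_left 1 n
      have hs : MeasurableSet {ω | ξ (n + 1) ω = true} :=
        (H.le (n + 2)) _ ((hξ_meas (n + 1) h1 hi) (measurableSet_singleton true))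
      have heq : Z (n + 1) = {ω | ξ (n + 1) ω = true}.indicator (Y (n + 1)) +
          ({ω | ξ (n + 1) ω = true}ᶜ).indicator (Z n) := by
        funext ω
        by_cases h : ξ (n + 1) ω = true <;>
          simp [hZ (n + 1) h1 hi ω, h, Set.indicator_apply]
      rw [heq]
      exact (MemLp.indicator hs (hY_L2 (n + 1) hi)).add (MemLp.indicator hs.compl (ih hn))
  -- integrability of squared norms of differences
  have hInt : ∀ a b : Ω → V, MemLp a 2 μ → MemLp b 2 μ →
      Integrable (fun ω => ‖a ω - b ω‖ ^ 2) μ := fun a b ha hb =>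
    ((ha.sub hb).norm).integrable_sq
  -- key independence computation
  have hkey : ∀ i, 1 ≤ i → i ≤ K → ∀ f : Ω → ℝ, Measurable[H i] f → Integrable f μ →
      ∫ ω, (if ξ i ω = true then (0 : ℝ) else 1) * f ω ∂μ = (1 - q) * ∫ ω, f ω ∂μ := by
    intro i h1 hiK f hfm hfi
    have hIF : IndepFun (ξ i) f μ := by
      rw [IndepFun_iff_Indep]
      exact indep_of_indep_of_le_right
        (indep_of_indep_of_le_left (hξ_indep i h1 hiK) (MeasurableSpace.comap_mono le_top))
        (measurable_iff_comap_le.mp hfm)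
    have hIF2 : IndepFun (fun ω => if ξ i ω = true then (0 : ℝ) else 1) f μ := by
      have hco : (fun ω => if ξ i ω = true then (0 : ℝ) else 1) =
          (fun b : Bool => if b = true then (0 : ℝ) else 1) ∘ (ξ i) := rfl
      rw [hco]
      have := hIF.comp (φ := fun b : Bool => if b = true then (0 : ℝ) else 1)
        (ψ := id) Measurable.of_discrete measurable_id
      exact this
    have hsT : MeasurableSet {ω | ξ i ω = true} :=
      (H.le (i + 1)) _ ((hξ_meas i h1 hiK) (measurableSet_singleton true))
    have hXm : AEStronglyMeasurable (fun ω => if ξ i ω = true then (0 : ℝ) else 1) μ :=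
      (Measurable.ite hsT measurable_const measurable_const).aestronglyMeasurable
    have hXint : Integrable (fun ω => if ξ i ω = true then (0 : ℝ) else 1) μ := by
      refine Integrable.mono' (integrable_const 1) hXm (ae_of_all _ fun ω => ?_)
      by_cases h : ξ i ω = true <;> simp [h]
    have hmul := IndepFun.integral_fun_mul_eq_mul_integral hIF2 hXint.aestronglyMeasurable hfi.aestronglyMeasurable
    have hXval : ∫ ω, (if ξ i ω = true then (0 : ℝ) else 1) ∂μ = 1 - q := by
      have hind : (fun ω => if ξ i ω = true then (0 : ℝ) else 1) =
          Set.indicator ({ω | ξ i ω = true}ᶜ) (fun _ => (1 : ℝ)) := by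
        funext ω
        by_cases h : ξ i ω = true <;> simp [h, Set.indicator_apply]
      rw [hind, integral_indicator_const (1 : ℝ) hsT.compl]
      rw [measureReal_def, measure_compl hsT (measure_ne_top μ _), measure_univ, hξ_law i h1 hiK]
      rw [smul_eq_mul, mul_one,
        ENNReal.toReal_sub_of_le (ENNReal.ofReal_le_one.mpr hq1) ENNReal.one_ne_top,
        ENNReal.toReal_one, ENNReal.toReal_ofReal hq0.le]
    calc ∫ ω, (if ξ i ω = true then (0 : ℝ) else 1) * f ω ∂μ
        = (∫ ω, (if ξ i ω = true then (0 : ℝ) else 1) ∂μ) * ∫ ω, f ω ∂μ := hmul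
      _ = (1 - q) * ∫ ω, f ω ∂μ := by rw [hXval]
  -- one-step recursion
  have hrec : ∀ i, 1 ≤ i → i + 1 ≤ K →
      ∫ ω, ‖Y (i + 1) ω - Z i ω‖ ^ 2 ∂μ ≤
        (1 - q / 2) * ∫ ω, ‖Y i ω - Z (i - 1) ω‖ ^ 2 ∂μ
          + (3 / q) * ∫ ω, ‖Y (i + 1) ω - Y i ω‖ ^ 2 ∂μ := by
    intro i h1 hiK
    have hiK' : i ≤ K := le_trans (Nat.le_succ i) hiK
    have hi1K : i - 1 ≤ K := le_trans (Nat.sub_le i 1) hiK'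
    have hpt : ∀ ω, ‖Y (i + 1) ω - Z i ω‖ ^ 2 ≤
        (1 + 2 / q) * ‖Y (i + 1) ω - Y i ω‖ ^ 2 +
        (1 + q / 2) * ((if ξ i ω = true then (0 : ℝ) else 1) * ‖Y i ω - Z (i - 1) ω‖ ^ 2) := by
      intro ω
      rw [hZ i h1 hiK' ω]
      by_cases h : ξ i ω = true
      · simp only [if_pos h]
        have h2q : (0 : ℝ) ≤ 2 / q := by positivity
        nlinarith [sq_nonneg ‖Y (i + 1) ω - Y i ω‖,
          mul_nonneg h2q (sq_nonneg ‖Y (i + 1) ω - Y i ω‖),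
          sq_nonneg ‖Y i ω - Z (i - 1) ω‖]
      · simp only [if_neg h]
        rw [one_mul]
        set a := ‖Y (i + 1) ω - Y i ω‖ with ha'
        set b := ‖Y i ω - Z (i - 1) ω‖ with hb'
        have hc : ‖Y (i + 1) ω - Z (i - 1) ω‖ ≤ a + b := by
          have hdec : Y (i + 1) ω - Z (i - 1) ω =
              (Y (i + 1) ω - Y i ω) + (Y i ω - Z (i - 1) ω) := by abel
          rw [hdec]; exact norm_add_le _ _
        have ha : 0 ≤ a := norm_nonneg _
        have hb : 0 ≤ b := norm_nonneg _
        have hcn : 0 ≤ ‖Y (i + 1) ω - Z (i - 1) ω‖ := norm_nonneg _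
        have hsq : ‖Y (i + 1) ω - Z (i - 1) ω‖ ^ 2 ≤ (a + b) ^ 2 := by nlinarith
        have key : q * ((a + b) ^ 2) ≤ q * ((1 + 2 / q) * a ^ 2 + (1 + q / 2) * b ^ 2) := by
          have e1 : q * ((1 + 2 / q) * a ^ 2 + (1 + q / 2) * b ^ 2) =
              (q + 2) * a ^ 2 + (q + q ^ 2 / 2) * b ^ 2 := by
            field_simp
          rw [e1]
          nlinarith [sq_nonneg (2 * a - q * b)]
        have hkey2 := (mul_le_mul_iff_right₀ hq0).mp key
        have : ‖Y (i + 1) ω - Z (i - 1) ω‖ ^ 2 ≤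
            (1 + 2 / q) * a ^ 2 + (1 + q / 2) * b ^ 2 := le_trans hsq hkey2
        linarith
    have hIntD : Integrable (fun ω => ‖Y i ω - Z (i - 1) ω‖ ^ 2) μ :=
      hInt _ _ (hY_L2 i hiK') (hZL2 (i - 1) hi1K)
    have hIntd : Integrable (fun ω => ‖Y (i + 1) ω - Y i ω‖ ^ 2) μ :=
      hInt _ _ (hY_L2 (i + 1) hiK) (hY_L2 i hiK')
    have hIntL : Integrable (fun ω => ‖Y (i + 1) ω - Z i ω‖ ^ 2) μ :=
      hInt _ _ (hY_L2 (i + 1) hiK) (hZL2 i hiK')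
    have hsT : MeasurableSet {ω | ξ i ω = true} :=
      (H.le (i + 1)) _ ((hξ_meas i h1 hiK') (measurableSet_singleton true))
    have hXm : AEStronglyMeasurable (fun ω => if ξ i ω = true then (0 : ℝ) else 1) μ :=
      (Measurable.ite hsT measurable_const measurable_const).aestronglyMeasurable
    have hIntX : Integrable
        (fun ω => (if ξ i ω = true then (0 : ℝ) else 1) * ‖Y i ω - Z (i - 1) ω‖ ^ 2) μ := by
      refine hIntD.bdd_mul (c := 1) hXm (ae_of_all _ fun ω => ?_)
      by_cases h : ξ i ω = true <;> simp [h]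
    have hfm : Measurable[H i] (fun ω => ‖Y i ω - Z (i - 1) ω‖ ^ 2) := by
      have hZm : Measurable[H i] (Z (i - 1)) := by
        have hm := hZmeas (i - 1) hi1K
        rwa [Nat.sub_add_cancel h1] at hm
      exact ((measurable_norm.pow_const 2).comp ((hY_meas i hiK').sub hZm) :)
    have hD0 : 0 ≤ ∫ ω, ‖Y i ω - Z (i - 1) ω‖ ^ 2 ∂μ :=
      integral_nonneg fun ω => sq_nonneg _
    have hd0 : 0 ≤ ∫ ω, ‖Y (i + 1) ω - Y i ω‖ ^ 2 ∂μ :=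
      integral_nonneg fun ω => sq_nonneg _
    have h35 : 1 + 2 / q ≤ 3 / q := by
      rw [le_div_iff₀ hq0]
      have : (1 + 2 / q) * q = q + 2 := by field_simp
      rw [this]; linarith
    have h12 : (1 + q / 2) * (1 - q) ≤ 1 - q / 2 := by nlinarith
    calc ∫ ω, ‖Y (i + 1) ω - Z i ω‖ ^ 2 ∂μ
        ≤ ∫ ω, ((1 + 2 / q) * ‖Y (i + 1) ω - Y i ω‖ ^ 2 +
            (1 + q / 2) * ((if ξ i ω = true then (0 : ℝ) else 1) *
              ‖Y i ω - Z (i - 1) ω‖ ^ 2)) ∂μ :=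
          integral_mono hIntL ((hIntd.const_mul _).add (hIntX.const_mul _)) hpt
      _ = (1 + 2 / q) * ∫ ω, ‖Y (i + 1) ω - Y i ω‖ ^ 2 ∂μ +
            (1 + q / 2) * ∫ ω, (if ξ i ω = true then (0 : ℝ) else 1) *
              ‖Y i ω - Z (i - 1) ω‖ ^ 2 ∂μ := by
          rw [integral_add (hIntd.const_mul _) (hIntX.const_mul _),
            integral_const_mul, integral_const_mul]
      _ = (1 + 2 / q) * ∫ ω, ‖Y (i + 1) ω - Y i ω‖ ^ 2 ∂μ +
            (1 + q / 2) * ((1 - q) * ∫ ω, ‖Y i ω - Z (i - 1) ω‖ ^ 2 ∂μ) := by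
          rw [hkey i h1 hiK' _ hfm hIntD]
      _ ≤ (1 - q / 2) * ∫ ω, ‖Y i ω - Z (i - 1) ω‖ ^ 2 ∂μ
          + (3 / q) * ∫ ω, ‖Y (i + 1) ω - Y i ω‖ ^ 2 ∂μ := by
          have e2 : (1 + q / 2) * ((1 - q) * ∫ ω, ‖Y i ω - Z (i - 1) ω‖ ^ 2 ∂μ) =
              ((1 + q / 2) * (1 - q)) * ∫ ω, ‖Y i ω - Z (i - 1) ω‖ ^ 2 ∂μ := by ring
          have hle1 : ((1 + q / 2) * (1 - q)) * ∫ ω, ‖Y i ω - Z (i - 1) ω‖ ^ 2 ∂μ ≤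
              (1 - q / 2) * ∫ ω, ‖Y i ω - Z (i - 1) ω‖ ^ 2 ∂μ :=
            mul_le_mul_of_nonneg_right h12 hD0
          have hle2 : (1 + 2 / q) * ∫ ω, ‖Y (i + 1) ω - Y i ω‖ ^ 2 ∂μ ≤
              (3 / q) * ∫ ω, ‖Y (i + 1) ω - Y i ω‖ ^ 2 ∂μ :=
            mul_le_mul_of_nonneg_right h35 hd0
          linarith [e2 ▸ hle1]
  -- main induction
  intro i
  induction i with
  | zero => intro h; exact absurd h (by norm_num)
  | succ n ih =>
    intro _ hK
    rcases Nat.eq_zero_or_pos n with hn | hn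
    · subst hn
      simp only [Nat.sub_self, Finset.Icc_self, Finset.sum_singleton, pow_zero, one_mul]
      rw [hZ0]
      have hd0 : 0 ≤ ∫ ω, ‖Y 1 ω - Y 0 ω‖ ^ 2 ∂μ := integral_nonneg fun ω => sq_nonneg _
      have h5 : 1 ≤ 5 / q := by
        rw [le_div_iff₀ hq0]; linarith
      nlinarith
    · have hK' : n ≤ K := Nat.le_of_succ_le hK
      have hDn := ih hn hK'
      have hrecn := hrec n hn hK
      have hd0 : 0 ≤ ∫ ω, ‖Y (n + 1) ω - Y n ω‖ ^ 2 ∂μ := integral_nonneg fun ω => sq_nonneg _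
      have hq2 : (0 : ℝ) ≤ 1 - q / 2 := by linarith
      have hmul := mul_le_mul_of_nonneg_left hDn hq2
      have hsum : (1 - q / 2) * ((5 / q) * ∑ i' ∈ Finset.Icc 1 n,
            (1 - q / 2) ^ (n - i') * ∫ ω, ‖Y i' ω - Y (i' - 1) ω‖ ^ 2 ∂μ)
          = (5 / q) * ∑ i' ∈ Finset.Icc 1 n,
            (1 - q / 2) ^ (n + 1 - i') * ∫ ω, ‖Y i' ω - Y (i' - 1) ω‖ ^ 2 ∂μ := by
        rw [← mul_assoc, mul_comm (1 - q / 2) (5 / q), mul_assoc, Finset.mul_sum]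
        congr 1
        refine Finset.sum_congr rfl fun i' hi' => ?_
        have hle : i' ≤ n := (Finset.mem_Icc.mp hi').2
        have hsub : n + 1 - i' = (n - i') + 1 := by omega
        rw [hsub, pow_succ]
        ring
      rw [Finset.sum_Icc_succ_top (Nat.le_add_left 1 n)]
      simp only [Nat.add_sub_cancel, Nat.sub_self, pow_zero, one_mul]
      rw [mul_add]
      have h3d : (3 / q) * ∫ ω, ‖Y (n + 1) ω - Y n ω‖ ^ 2 ∂μ ≤
          (5 / q) * ∫ ω, ‖Y (n + 1) ω - Y n ω‖ ^ 2 ∂μ :=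
        mul_le_mul_of_nonneg_right ((div_le_div_iff_of_pos_right hq0).mpr (by norm_num)) hd0
      have hchain := le_trans hrecn (by linarith [hsum ▸ hmul] :
        (1 - q / 2) * ∫ ω, ‖Y n ω - Z (n - 1) ω‖ ^ 2 ∂μ
          + (3 / q) * ∫ ω, ‖Y (n + 1) ω - Y n ω‖ ^ 2 ∂μ ≤
        (5 / q) * ∑ i' ∈ Finset.Icc 1 n,
            (1 - q / 2) ^ (n + 1 - i') * ∫ ω, ‖Y i' ω - Y (i' - 1) ω‖ ^ 2 ∂μ
          + (5 / q) * ∫ ω, ‖Y (n + 1) ω - Y n ω‖ ^ 2 ∂μ)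
      exact hchain
  
end
end

section
/- Let (Ω, 𝔽, P) be a probability space with a filtration (H_i)_{i≥0}, let V be a finite-dimensional real normed vector space, and let q ∈ (0, 1]. Let Y_0, Y_1, …, Y_K be square-integrable V-valued random vectors with Y_i measurable with respect to H_i, let ξ_1, …, ξ_K be {0,1}-valued random variables with P(ξ_i = 1) = q, ξ_i independent of H_i and H_{i+1}-measurable, and define Z_0 = Y_0 and Z_i = Y_i if ξ_i = 1, Z_i = Z_{i−1} otherwise. Then for every 2 ≤ i ≤ K: E[‖Y_i − Z_{i−1}‖²] ≤ (5/q) E[‖Y_i − Y_{i−1}‖²] + (1 − q/2) E[‖Y_{i−1} − Z_{i−2}‖²]. -/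
open MeasureTheory ProbabilityTheory

noncomputable section

private lemma young_aux (q r t s : ℝ) (hq0 : 0 < q) (hr : 0 ≤ r) (ht : 0 ≤ t) (hs : 0 ≤ s)
    (h : r ≤ t + s) : r ^ 2 ≤ (1 + 4 / q) * t ^ 2 + (1 + q / 4) * s ^ 2 := by
  have h2 : r ^ 2 ≤ (t + s) ^ 2 := by nlinarith
  have key : q * r ^ 2 ≤ q * ((1 + 4 / q) * t ^ 2 + (1 + q / 4) * s ^ 2) := by
    have heq : q * ((1 + 4 / q) * t ^ 2 + (1 + q / 4) * s ^ 2)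
        = (q + 4) * t ^ 2 + (q + q ^ 2 / 4) * s ^ 2 := by
      field_simp
    rw [heq]
    nlinarith [sq_nonneg (2 * t - q * s / 2), hq0.le, h2]
  exact le_of_mul_le_mul_left key hq0

private lemma coeff_aux (q B D : ℝ) (hq0 : 0 < q) (hq1 : q ≤ 1) (hB : 0 ≤ B) (hD : 0 ≤ D) :
    (1 + 4 / q) * B + (1 + q / 4) * ((1 - q) * D) ≤ 5 / q * B + (1 - q / 2) * D := by
  have h1 : 1 + 4 / q ≤ 5 / q := by
    rw [← sub_nonneg]
    have : 5 / q - (1 + 4 / q) = (1 - q) / q := by field_simp; ring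
    rw [this]
    exact div_nonneg (by linarith) hq0.le
  have h2 : (1 + q / 4) * (1 - q) ≤ 1 - q / 2 := by nlinarith
  nlinarith [mul_le_mul_of_nonneg_right h1 hB, mul_le_mul_of_nonneg_right h2 hD]

private lemma meas_sq_aux {Ω : Type*} {V : Type*} (m : MeasurableSpace Ω)
    [NormedAddCommGroup V] [NormedSpace ℝ V] [FiniteDimensional ℝ V]
    [MeasurableSpace V] [BorelSpace V]
    (f g : Ω → V) (hf : Measurable[m] f) (hg : Measurable[m] g) :
    Measurable[m] (fun ω => ‖f ω - g ω‖ ^ 2) :=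
  ((hf.sub hg).norm.pow_const 2)

/-- One-step recursive variance inequality for the lazily refreshed operator
estimates of the Randomized Extrapolated Method. -/
theorem stmt4 {Ω : Type*} (m0 : MeasurableSpace Ω) (μ : Measure Ω) [IsProbabilityMeasure μ]
    (H : Filtration ℕ m0)
    (V : Type*) [NormedAddCommGroup V] [NormedSpace ℝ V] [FiniteDimensional ℝ V]
    [MeasurableSpace V] [BorelSpace V]
    (q : ℝ) (hq : q ∈ Set.Ioc (0 : ℝ) 1)
    (K : ℕ) (Y : ℕ → Ω → V)
    (hY_meas : ∀ i, i ≤ K → Measurable[H i] (Y i))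
    (hY_L2 : ∀ i, i ≤ K → MemLp (Y i) 2 μ)
    (ξ : ℕ → Ω → Bool)
    (hξ_law : ∀ i, 1 ≤ i → i ≤ K → μ {ω | ξ i ω = true} = ENNReal.ofReal q)
    (hξ_indep : ∀ i, 1 ≤ i → i ≤ K → Indep (MeasurableSpace.comap (ξ i) ⊤) (H i) μ)
    (hξ_meas : ∀ i, 1 ≤ i → i ≤ K → Measurable[H (i + 1)] (ξ i))
    (Z : ℕ → Ω → V) (hZ0 : Z 0 = Y 0)
    (hZ : ∀ i, 1 ≤ i → i ≤ K → ∀ ω, Z i ω = if ξ i ω = true then Y i ω else Z (i - 1) ω) :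
    ∀ i, 2 ≤ i → i ≤ K →
      ∫ ω, ‖Y i ω - Z (i - 1) ω‖ ^ 2 ∂μ ≤
        (5 / q) * ∫ ω, ‖Y i ω - Y (i - 1) ω‖ ^ 2 ∂μ
          + (1 - q / 2) * ∫ ω, ‖Y (i - 1) ω - Z (i - 2) ω‖ ^ 2 ∂μ := by
  obtain ⟨hq0, hq1⟩ := hq
  -- integrability of squared norms of L² functions
  have hInt : ∀ f : Ω → V, MemLp f 2 μ → Integrable (fun ω => ‖f ω‖ ^ 2) μ := by
    intro f hf
    have h := hf.integrable_norm_rpow (by norm_num) ENNReal.ofNat_ne_top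
    simpa [ENNReal.toReal_ofNat, Real.rpow_natCast] using h
  -- measurability of Z
  have hZmeas : ∀ j, j ≤ K → Measurable[H (j + 1)] (Z j) := by
    intro j
    induction j with
    | zero =>
      intro _
      rw [hZ0]
      exact (hY_meas 0 (Nat.zero_le _)).mono (H.mono (Nat.zero_le 1)) le_rfl
    | succ n ih =>
      intro hn
      have hn' : n ≤ K := le_of_lt (Nat.lt_of_lt_of_le (Nat.lt_succ_self n) hn)
      have heq : Z (n + 1) = fun ω => if ξ (n + 1) ω = true then Y (n + 1) ω else Z n ω := by
        funext ω
        simpa using hZ (n + 1) (Nat.le_add_left 1 n) hn ω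
      rw [heq]
      have hsm : MeasurableSet[H (n + 1 + 1)] {ω | ξ (n + 1) ω = true} :=
        hξ_meas (n + 1) (Nat.le_add_left 1 n) hn (measurableSet_singleton true)
      exact Measurable.ite hsm
        ((hY_meas (n + 1) hn).mono (H.mono (Nat.le_succ _)) le_rfl)
        ((ih hn').mono (H.mono (Nat.le_succ _)) le_rfl)
  -- Z is in L²
  have hZL2 : ∀ j, j ≤ K → MemLp (Z j) 2 μ := by
    intro j
    induction j with
    | zero => intro _; rw [hZ0]; exact hY_L2 0 (Nat.zero_le _)
    | succ n ih =>
      intro hn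
      have hn' : n ≤ K := le_of_lt (Nat.lt_of_lt_of_le (Nat.lt_succ_self n) hn)
      have hsm : MeasurableSet {ω | ξ (n + 1) ω = true} :=
        H.le (n + 1 + 1) _ (hξ_meas (n + 1) (Nat.le_add_left 1 n) hn (measurableSet_singleton true))
      have heq : Z (n + 1) = {ω | ξ (n + 1) ω = true}.indicator (Y (n + 1))
          + {ω | ξ (n + 1) ω = true}ᶜ.indicator (Z n) := by
        funext ω
        simp only [Pi.add_apply, Set.indicator_apply, Set.mem_compl_iff, Set.mem_setOf_eq]
        rw [hZ (n + 1) (Nat.le_add_left 1 n) hn ω]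
        by_cases h : ξ (n + 1) ω = true <;> simp [h]
      rw [heq]
      exact ((hY_L2 (n + 1) hn).indicator hsm).add ((ih hn').indicator hsm.compl)
  intro i hi2 hiK
  have hi1K : i - 1 ≤ K := by omega
  have hi11 : 1 ≤ i - 1 := by omega
  have hi2K : i - 2 ≤ K := by omega
  -- L² facts
  have hYiL2 := hY_L2 i hiK
  have hYjL2 := hY_L2 (i - 1) hi1K
  have hZjL2 := hZL2 (i - 1) hi1K
  have hZkL2 := hZL2 (i - 2) hi2K
  have hA_int : Integrable (fun ω => ‖Y i ω - Z (i - 1) ω‖ ^ 2) μ := hInt _ (hYiL2.sub hZjL2)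
  have hB_int : Integrable (fun ω => ‖Y i ω - Y (i - 1) ω‖ ^ 2) μ := hInt _ (hYiL2.sub hYjL2)
  have hC_int : Integrable (fun ω => ‖Y (i - 1) ω - Z (i - 1) ω‖ ^ 2) μ := hInt _ (hYjL2.sub hZjL2)
  have hD_int : Integrable (fun ω => ‖Y (i - 1) ω - Z (i - 2) ω‖ ^ 2) μ := hInt _ (hYjL2.sub hZkL2)
  -- the auxiliary function g
  set g : Ω → ℝ := fun ω => if ξ (i - 1) ω = true then 0 else 1 with hgdef
  have hSmeasH : MeasurableSet[H (i - 1 + 1)] {ω | ξ (i - 1) ω = true} :=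
    hξ_meas (i - 1) hi11 hi1K (measurableSet_singleton true)
  have hSmeas : MeasurableSet {ω | ξ (i - 1) ω = true} := H.le _ _ hSmeasH
  have hg_meas : Measurable g := by
    exact Measurable.ite hSmeas measurable_const measurable_const
  have hg_comap : Measurable[MeasurableSpace.comap (ξ (i - 1)) ⊤] g := by
    intro s _
    exact ⟨(fun b => if b = true then (0 : ℝ) else 1) ⁻¹' s, trivial, rfl⟩
  have hg_int : Integrable g μ := by
    refine Integrable.mono' (integrable_const (1 : ℝ)) hg_meas.aestronglyMeasurable ?_
    filter_upwards with ω
    by_cases h : ξ (i - 1) ω = true <;> simp [hgdef, h]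
  -- f := squared distance from Y_{i-1} to Z_{i-2}, measurable wrt H (i-1)
  have hZk_measH : Measurable[H (i - 1)] (Z (i - 2)) := by
    have h := hZmeas (i - 2) hi2K
    rwa [show i - 2 + 1 = i - 1 by omega] at h
  have hf_measH : Measurable[H (i - 1)] (fun ω => ‖Y (i - 1) ω - Z (i - 2) ω‖ ^ 2) :=
    meas_sq_aux (H (i - 1)) _ _ (hY_meas (i - 1) hi1K) hZk_measH
  -- independence
  have hindep : IndepFun g (fun ω => ‖Y (i - 1) ω - Z (i - 2) ω‖ ^ 2) μ := by
    rw [IndepFun_iff_Indep]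
    exact indep_of_indep_of_le_left
      (indep_of_indep_of_le_right (hξ_indep (i - 1) hi11 hi1K) (measurable_iff_comap_le.mp hf_measH))
      (measurable_iff_comap_le.mp hg_comap)
  -- pointwise product identity
  have hprod : ∀ ω, ‖Y (i - 1) ω - Z (i - 1) ω‖ ^ 2 = g ω * ‖Y (i - 1) ω - Z (i - 2) ω‖ ^ 2 := by
    intro ω
    rw [hZ (i - 1) hi11 hi1K ω, show i - 1 - 1 = i - 2 by omega]
    by_cases h : ξ (i - 1) ω = true <;> simp [hgdef, h]
  -- integral of g
  have hg_integral : ∫ ω, g ω ∂μ = 1 - q := by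
    have hgind : g = Set.indicator {ω | ξ (i - 1) ω = true}ᶜ (fun _ => (1 : ℝ)) := by
      funext ω
      by_cases h : ξ (i - 1) ω = true <;> simp [hgdef, h, Set.indicator_apply]
    rw [hgind, integral_indicator_const _ hSmeas.compl]
    rw [smul_eq_mul, mul_one, measureReal_def, measure_compl hSmeas (measure_ne_top μ _), measure_univ,
      hξ_law (i - 1) hi11 hi1K]
    rw [ENNReal.toReal_sub_of_le (ENNReal.ofReal_le_one.mpr hq1) ENNReal.one_ne_top]
    simp [ENNReal.toReal_ofReal hq0.le]
  -- refresh identity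
  have hCeq : ∫ ω, ‖Y (i - 1) ω - Z (i - 1) ω‖ ^ 2 ∂μ
      = (1 - q) * ∫ ω, ‖Y (i - 1) ω - Z (i - 2) ω‖ ^ 2 ∂μ := by
    calc ∫ ω, ‖Y (i - 1) ω - Z (i - 1) ω‖ ^ 2 ∂μ
        = ∫ ω, g ω * ‖Y (i - 1) ω - Z (i - 2) ω‖ ^ 2 ∂μ :=
          integral_congr_ae (Filter.Eventually.of_forall hprod)
      _ = (∫ ω, g ω ∂μ) * ∫ ω, ‖Y (i - 1) ω - Z (i - 2) ω‖ ^ 2 ∂μ :=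
          hindep.integral_fun_mul_eq_mul_integral hg_int.aestronglyMeasurable hD_int.aestronglyMeasurable
      _ = (1 - q) * ∫ ω, ‖Y (i - 1) ω - Z (i - 2) ω‖ ^ 2 ∂μ := by rw [hg_integral]
  -- Young's inequality step
  have hmono : ∫ ω, ‖Y i ω - Z (i - 1) ω‖ ^ 2 ∂μ
      ≤ ∫ ω, ((1 + 4 / q) * ‖Y i ω - Y (i - 1) ω‖ ^ 2
          + (1 + q / 4) * ‖Y (i - 1) ω - Z (i - 1) ω‖ ^ 2) ∂μ := by
    refine integral_mono hA_int ((hB_int.const_mul _).add (hC_int.const_mul _)) ?_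
    intro ω
    have htri : ‖Y i ω - Z (i - 1) ω‖
        ≤ ‖Y i ω - Y (i - 1) ω‖ + ‖Y (i - 1) ω - Z (i - 1) ω‖ := by
      have := norm_sub_le_norm_sub_add_norm_sub (Y i ω) (Y (i - 1) ω) (Z (i - 1) ω)
      linarith
    exact young_aux q _ _ _ hq0 (norm_nonneg _) (norm_nonneg _) (norm_nonneg _) htri
  rw [integral_add (hB_int.const_mul _) (hC_int.const_mul _), integral_const_mul,
    integral_const_mul, hCeq] at hmono
  have hB_nn : (0 : ℝ) ≤ ∫ ω, ‖Y i ω - Y (i - 1) ω‖ ^ 2 ∂μ :=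
    integral_nonneg fun ω => sq_nonneg _
  have hD_nn : (0 : ℝ) ≤ ∫ ω, ‖Y (i - 1) ω - Z (i - 2) ω‖ ^ 2 ∂μ :=
    integral_nonneg fun ω => sq_nonneg _
  exact hmono.trans (coeff_aux q _ _ hq0 hq1 hB_nn hD_nn)

end
end

section
/- Let L > 0, γ > 0 and q* ∈ (0, 1]. Set α := min{ q*/11, γ/(10 L) }, A_0 := 0, A_1 := sqrt(2/3)/(10 L), A_k := A_1 (1 + α)^{k−1} for k ≥ 1, and a_k := A_k − A_{k−1} for k ≥ 1. Then for all k ≥ 2: a_k²/(A_k γ + 1) ≤ (1 + q*/5) a_{k−1}²/(A_{k−1} γ + 1) and 25 L² a_{k−1}²/(A_{k−1} γ + 1) ≤ (A_{k−2} γ + 1)/4. Consequently, A_k ≥ (1/(10 L)) · sqrt(2/3) · (1 + min{ q*/11, γ/(10 L) })^{k−1} for all k ≥ 1. -/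
noncomputable section

set_option maxHeartbeats 800000 in
/-- Step-size feasibility conditions of the main convergence theorem for the
Randomized Extrapolated Method in the strongly monotone case (γ > 0), together with
the resulting geometric growth of the sequence A_k. -/
theorem stmt8 (L γ qstar : ℝ) (hL : 0 < L) (hγ : 0 < γ) (hqstar : qstar ∈ Set.Ioc (0 : ℝ) 1)
    (α : ℝ) (hα : α = min (qstar / 11) (γ / (10 * L)))
    (A : ℕ → ℝ) (hA0 : A 0 = 0)
    (hA : ∀ k : ℕ, 1 ≤ k → A k = Real.sqrt (2 / 3) / (10 * L) * (1 + α) ^ (k - 1))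
    (a : ℕ → ℝ) (ha : ∀ k : ℕ, 1 ≤ k → a k = A k - A (k - 1)) :
    (∀ k : ℕ, 2 ≤ k →
      (a k) ^ 2 / (A k * γ + 1) ≤ (1 + qstar / 5) * ((a (k - 1)) ^ 2 / (A (k - 1) * γ + 1)) ∧
      25 * L ^ 2 * (a (k - 1)) ^ 2 / (A (k - 1) * γ + 1) ≤ (A (k - 2) * γ + 1) / 4) ∧
    (∀ k : ℕ, 1 ≤ k →
      (1 / (10 * L)) * Real.sqrt (2 / 3) * (1 + min (qstar / 11) (γ / (10 * L))) ^ (k - 1)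
        ≤ A k) := by
  obtain ⟨hq0, hq1⟩ := hqstar
  obtain ⟨c, hc_def⟩ : ∃ c : ℝ, c = Real.sqrt (2 / 3) / (10 * L) := ⟨_, rfl⟩
  have hA' : ∀ k : ℕ, 1 ≤ k → A k = c * (1 + α) ^ (k - 1) := by
    intro k hk; rw [hA k hk, hc_def]
  have hs : Real.sqrt (2 / 3) ^ 2 = 2 / 3 := Real.sq_sqrt (by norm_num)
  have hspos : 0 < Real.sqrt (2 / 3) := Real.sqrt_pos.mpr (by norm_num)
  have hcpos : 0 < c := hc_def ▸ div_pos hspos (by linarith)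
  have hα0 : 0 < α := by
    rw [hα]; exact lt_min (by linarith) (div_pos hγ (by linarith))
  have hα1 : α ≤ qstar / 11 := hα ▸ min_le_left _ _
  have hα2 : α ≤ γ / (10 * L) := hα ▸ min_le_right _ _
  have hαL : α * (10 * L) ≤ γ := by
    rw [le_div_iff₀ (by linarith : (0:ℝ) < 10 * L)] at hα2; linarith
  have hsq : (1 + α) ^ 2 ≤ 1 + qstar / 5 := by nlinarith
  have hApos : ∀ n : ℕ, 0 ≤ A n := by
    intro n
    rcases Nat.eq_zero_or_pos n with h | h
    · simp [h, hA0]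
    · rw [hA' n h]; positivity
  have hc2 : 25 * L ^ 2 * c ^ 2 = 1 / 6 := by
    rw [hc_def, div_pow, hs]
    field_simp
    ring
  constructor
  · intro k hk
    obtain ⟨n, rfl⟩ : ∃ n, k = n + 2 := ⟨k - 2, by omega⟩
    have e2 : n + 2 - 1 = n + 1 := by omega
    have e1 : n + 2 - 2 = n := by omega
    have h2 : A (n + 2) = c * (1 + α) ^ (n + 1) := by rw [hA' (n + 2) (by omega), e2]
    have h1 : A (n + 1) = c * (1 + α) ^ n := by
      rw [hA' (n + 1) (by omega), Nat.add_sub_cancel]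
    rw [e1, e2]
    have ha2 : a (n + 2) = c * α * (1 + α) ^ n := by
      rw [ha (n + 2) (by omega), e2, h2, h1]; ring
    have hpow : (0:ℝ) < (1 + α) ^ n := by positivity
    have ha1 : ∀ m : ℕ, a (m + 1 + 1) = c * α * (1 + α) ^ m := by
      intro m
      have em : m + 1 + 1 - 1 = m + 1 := by omega
      rw [ha (m + 1 + 1) (by omega), em, hA' (m + 1 + 1) (by omega), em,
        hA' (m + 1) (by omega), Nat.add_sub_cancel]
      ring
    have ha1sq : a (n + 2) ^ 2 ≤ (1 + qstar / 5) * a (n + 1) ^ 2 := by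
      rcases n with _ | m
      · have h10 : a 1 = c := by rw [ha 1 (by omega)]; simp [hA0, hA' 1 le_rfl]
        rw [h10, ha2]
        nlinarith [sq_nonneg c, hq0.le, hα1]
      · rw [ha2, ha1 m]
        have hp : (0:ℝ) ≤ (c * α * (1 + α) ^ m) ^ 2 := sq_nonneg _
        have : (c * α * (1 + α) ^ (m + 1)) ^ 2
            = (1 + α) ^ 2 * (c * α * (1 + α) ^ m) ^ 2 := by ring
        rw [this]
        exact mul_le_mul_of_nonneg_right hsq hp
    have hden1 : (0:ℝ) < A (n + 1) * γ + 1 := by nlinarith [hApos (n + 1)]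
    have hden2 : A (n + 1) * γ + 1 ≤ A (n + 2) * γ + 1 := by
      have hle : A (n + 1) ≤ A (n + 2) := by
        rw [h1, h2, pow_succ, ← mul_assoc]
        exact le_mul_of_one_le_right (mul_nonneg hcpos.le hpow.le) (by linarith)
      have := mul_le_mul_of_nonneg_right hle hγ.le
      linarith
    constructor
    · calc a (n + 2) ^ 2 / (A (n + 2) * γ + 1)
          ≤ ((1 + qstar / 5) * a (n + 1) ^ 2) / (A (n + 1) * γ + 1) :=
            div_le_div₀ (by positivity) ha1sq hden1 hden2
        _ = (1 + qstar / 5) * (a (n + 1) ^ 2 / (A (n + 1) * γ + 1)) := by ring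
    · rw [div_le_iff₀ hden1]
      rcases n with _ | m
      · have h10 : a 1 = c := by rw [ha 1 (by omega)]; simp [hA0, hA' 1 le_rfl]
        have hA1 : A 1 = c := by rw [hA' 1 le_rfl]; simp
        rw [h10, hA1, hA0]
        nlinarith [mul_pos hcpos hγ]
      · have ham : a (m + 1 + 1) = α * A (m + 1) := by
          rw [ha1 m, hA' (m + 1) (by omega), Nat.add_sub_cancel]; ring
        rw [ham]
        have hAm : 0 ≤ A (m + 1) := hApos (m + 1)
        have key : 25 * L ^ 2 * α ^ 2 ≤ γ ^ 2 / 4 := by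
          nlinarith [sq_nonneg (γ - α * (10 * L)), mul_pos hα0 hL]
        have h1' : γ ^ 2 * A (m + 1) ^ 2 ≤ (A (m + 1) * γ + 1) ^ 2 := by
          nlinarith [mul_nonneg hAm hγ.le]
        have s1 : 25 * L ^ 2 * (α * A (m + 1)) ^ 2 ≤ γ ^ 2 / 4 * A (m + 1) ^ 2 := by
          nlinarith [mul_le_mul_of_nonneg_right key (sq_nonneg (A (m + 1)))]
        have hmono : A (m + 1) ≤ A (m + 1 + 1) := by
          rw [h1, hA' (m + 1) (by omega), Nat.add_sub_cancel, pow_succ, ← mul_assoc]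
          exact le_mul_of_one_le_right
            (mul_nonneg hcpos.le (by positivity)) (by linarith)
        have hApos1 : (0:ℝ) < A (m + 1) * γ + 1 := by nlinarith [mul_nonneg hAm hγ.le]
        have hmul : A (m + 1) * γ + 1 ≤ A (m + 1 + 1) * γ + 1 := by
          nlinarith [mul_le_mul_of_nonneg_right hmono hγ.le]
        nlinarith [s1, h1',
          mul_le_mul_of_nonneg_left hmul (by linarith : (0:ℝ) ≤ (A (m + 1) * γ + 1) / 4)]
  · intro k hk
    rw [hA k hk, ← hα]
    apply le_of_eq
    ring
end
end

section
/- Let h : ℝ^d → ℝ be differentiable and 1-strongly convex with respect to the Euclidean norm, with Bregman divergence D(x,y) = h(x) − h(y) − ⟨∇h(y), x − y⟩. Let (Ω, 𝔽, P) be a probability space with filtration (F_k)_{k≥1}, and let u_1, …, u_K : Ω → ℝ^d be square-integrable random vectors such that u_k is F_{k+1}-measurable and E[u_k | F_k] = 0 for each k. Then for any fixed x_0 ∈ ℝ^d that is independent of the u_k's and any square-integrable measurable x : Ω → ℝ^d (possibly depending on the u_k's) with E[D(x, x_0)] < ∞: E[ Σ_{k=1}^K ⟨u_k, x⟩ ]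 ≤ E[ D(x, x_0) ] + (1/2) Σ_{k=1}^K E[ ‖u_k‖² ], where ‖·‖ is the Euclidean norm. -/
open MeasureTheory ProbabilityTheory Finset
open scoped RealInnerProductSpace

noncomputable section

section Aux

variable {Ω : Type*} {m0 : MeasurableSpace Ω} {μ : Measure Ω}

private lemma aux_integrable_inner {E : Type*} [NormedAddCommGroup E] [InnerProductSpace ℝ E]
    {f g : Ω → E} (hf : MemLp f 2 μ) (hg : MemLp g 2 μ) :
    Integrable (fun ω => ⟪f ω, g ω⟫) μ := by
  have h := L2.integrable_inner (𝕜 := ℝ) (hf.toLp f) (hg.toLp g)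
  refine h.congr ?_
  filter_upwards [hf.coeFn_toLp, hg.coeFn_toLp] with ω h1 h2
  rw [h1, h2]

private lemma aux_condexp_comp_zero {d : ℕ} (F : Filtration ℕ m0) (k : ℕ)
    [IsProbabilityMeasure μ] {g : Ω → EuclideanSpace ℝ (Fin d)} (hg : Integrable g μ)
    (hg0 : μ[g | F k] =ᵐ[μ] 0) (i : Fin d) :
    μ[fun ω => g ω i | F k] =ᵐ[μ] 0 := by
  have hm : (F k : MeasurableSpace Ω) ≤ m0 := F.le k
  have hgi : Integrable (fun ω => g ω i) μ := by
    have := (EuclideanSpace.proj i (𝕜 := ℝ)).integrable_comp hg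
    simpa using this
  refine (ae_eq_condExp_of_forall_setIntegral_eq hm hgi ?_ ?_ ?_).symm
  · exact fun s _ _ => (integrable_zero _ _ _).integrableOn
  · intro s hs _
    have hint0 : ∫ ω in s, g ω ∂μ = 0 := by
      rw [← setIntegral_condExp hm hg hs]
      rw [setIntegral_congr_ae (hm s hs) (hg0.mono fun ω hω _ => hω)]
      simp
    have h2 : ∫ ω in s, g ω i ∂μ
        = (EuclideanSpace.proj i (𝕜 := ℝ)) (∫ ω in s, g ω ∂μ) := by
      rw [← ContinuousLinearMap.integral_comp_comm _ hg.integrableOn]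
      simp
    simp [h2, hint0]
  · exact stronglyMeasurable_const.aestronglyMeasurable

private lemma aux_cross {d : ℕ} [IsProbabilityMeasure μ] (F : Filtration ℕ m0)
    {j k : ℕ} (hjk : j + 1 ≤ k)
    {uj uk : Ω → EuclideanSpace ℝ (Fin d)}
    (hj_meas : Measurable[F (j + 1)] uj) (hj2 : MemLp uj 2 μ) (hk2 : MemLp uk 2 μ)
    (hk0 : μ[uk | F k] =ᵐ[μ] 0) :
    ∫ ω, ⟪uj ω, uk ω⟫ ∂μ = 0 := by
  have hcomp2 : ∀ (v : Ω → EuclideanSpace ℝ (Fin d)), MemLp v 2 μ → ∀ i : Fin d,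
      MemLp (fun ω => v ω i) 2 μ := by
    intro v hv i
    have := (EuclideanSpace.proj i (𝕜 := ℝ)).comp_memLp' hv
    exact this
  have hint : ∀ i : Fin d, Integrable (fun ω => uj ω i * uk ω i) μ := by
    intro i
    have := aux_integrable_inner (hcomp2 uj hj2 i) (hcomp2 uk hk2 i)
    simpa [RCLike.inner_apply, conj_trivial, mul_comm] using this
  have hexp : (fun ω => ⟪uj ω, uk ω⟫) = fun ω => ∑ i : Fin d, uj ω i * uk ω i := by
    funext ω
    simp [PiLp.inner_apply, RCLike.inner_apply, conj_trivial]
    exact Finset.sum_congr rfl fun _ _ => mul_comm _ _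
  rw [hexp, integral_finset_sum _ fun i _ => hint i]
  refine Finset.sum_eq_zero fun i _ => ?_
  have hj_i : Measurable[F (j + 1)] fun ω => uj ω i :=
    (EuclideanSpace.proj i (𝕜 := ℝ)).continuous.measurable.comp hj_meas
  have hj_i' : StronglyMeasurable[F (j + 1)] fun ω => uj ω i :=
    Measurable.stronglyMeasurable (mα := F (j + 1)) hj_i
  have hf_m : StronglyMeasurable[F k] (fun ω => uj ω i) := hj_i'.mono (F.mono hjk)
  have hg_int : Integrable (fun ω => uk ω i) μ :=
    (hcomp2 uk hk2 i).integrable one_le_two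
  have hg_cond : μ[fun ω => uk ω i | F k] =ᵐ[μ] 0 :=
    aux_condexp_comp_zero F k (hk2.integrable one_le_two) hk0 i
  have hpull := condExp_mul_of_stronglyMeasurable_left hf_m (hint i) hg_int
  have hzero : μ[(fun ω => uj ω i) * fun ω => uk ω i | F k] =ᵐ[μ] 0 := by
    refine hpull.trans ?_
    filter_upwards [hg_cond] with ω hω
    simp [hω]
  have hmul : (fun ω => uj ω i * uk ω i)
      = (fun ω => uj ω i) * fun ω => uk ω i := rfl
  rw [hmul, ← integral_condExp (F.le k)]
  rw [integral_congr_ae hzero]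
  simp

end Aux

/-- Bound on the expected inner product of a sum of martingale-difference vectors
with a possibly dependent comparison vector x, via the Bregman divergence of a
1-strongly convex (w.r.t. the Euclidean norm) function h. -/
theorem stmt11 {Ω : Type*} (m0 : MeasurableSpace Ω) (μ : Measure Ω) [IsProbabilityMeasure μ]
    (d : ℕ)
    (h : EuclideanSpace ℝ (Fin d) → ℝ)
    (h' : EuclideanSpace ℝ (Fin d) → EuclideanSpace ℝ (Fin d))
    (hh_diff : ∀ x, HasGradientAt h (h' x) x)
    (hh_sconv : ∀ x y : EuclideanSpace ℝ (Fin d),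
      h x + ⟪h' x, y - x⟫ + (1 / 2) * ‖y - x‖ ^ 2 ≤ h y)
    (F : Filtration ℕ m0)
    (K : ℕ) (u : ℕ → Ω → EuclideanSpace ℝ (Fin d))
    (hu_meas : ∀ k, 1 ≤ k → k ≤ K → Measurable[F (k + 1)] (u k))
    (hu_L2 : ∀ k, 1 ≤ k → k ≤ K → MemLp (u k) 2 μ)
    (hu_mean : ∀ k, 1 ≤ k → k ≤ K → μ[u k | F k] =ᵐ[μ] 0)
    (x0 : EuclideanSpace ℝ (Fin d))
    (x : Ω → EuclideanSpace ℝ (Fin d)) (hx_meas : Measurable x) (hx_L2 : MemLp x 2 μ)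
    (hx_D_int : Integrable (fun ω => h (x ω) - h x0 - ⟪h' x0, x ω - x0⟫) μ) :
    ∫ ω, ∑ k ∈ Finset.Icc 1 K, ⟪u k ω, x ω⟫ ∂μ ≤
      (∫ ω, (h (x ω) - h x0 - ⟪h' x0, x ω - x0⟫) ∂μ)
        + (1 / 2) * ∑ k ∈ Finset.Icc 1 K, ∫ ω, ‖u k ω‖ ^ 2 ∂μ := by
  set S : Ω → EuclideanSpace ℝ (Fin d) := fun ω => ∑ k ∈ Finset.Icc 1 K, u k ω with hS_def
  have hu2 : ∀ k ∈ Finset.Icc 1 K, MemLp (u k) 2 μ := fun k hk =>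
    hu_L2 k (Finset.mem_Icc.mp hk).1 (Finset.mem_Icc.mp hk).2
  have hS2 : MemLp S 2 μ := by
    refine (memLp_finset_sum' (Finset.Icc 1 K) hu2).ae_eq ?_
    refine Filter.Eventually.of_forall fun ω => ?_
    simp [hS_def, Finset.sum_apply]
  -- pointwise bound
  have hpt : ∀ ω, ∑ k ∈ Finset.Icc 1 K, ⟪u k ω, x ω⟫ ≤
      (h (x ω) - h x0 - ⟪h' x0, x ω - x0⟫) + (1 / 2) * ‖S ω‖ ^ 2 + ⟪S ω, x0⟫ := by
    intro ω
    have hsum : ∑ k ∈ Finset.Icc 1 K, ⟪u k ω, x ω⟫ = ⟪S ω, x ω⟫ := by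
      simp only [hS_def]
      rw [sum_inner]
    have h1 := hh_sconv x0 (x ω)
    have h2 : ⟪S ω, x ω - x0⟫ ≤ ‖S ω‖ * ‖x ω - x0‖ := real_inner_le_norm _ _
    have h3 : ⟪S ω, x ω⟫ = ⟪S ω, x ω - x0⟫ + ⟪S ω, x0⟫ := by
      rw [← inner_add_right]
      simp
    rw [hsum, h3]
    nlinarith [sq_nonneg (‖S ω‖ - ‖x ω - x0‖), sq_nonneg (‖x ω - x0‖)]
  -- integrability
  have hlhs_int : Integrable (fun ω => ∑ k ∈ Finset.Icc 1 K, ⟪u k ω, x ω⟫) μ :=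
    integrable_finset_sum _ fun k hk => aux_integrable_inner (hu2 k hk) hx_L2
  have hSS_int : Integrable (fun ω => ‖S ω‖ ^ 2) μ := by
    have := aux_integrable_inner hS2 hS2
    refine this.congr (Filter.Eventually.of_forall fun ω => ?_)
    exact real_inner_self_eq_norm_sq _
  have hSx0_int : Integrable (fun ω => ⟪S ω, x0⟫) μ :=
    aux_integrable_inner hS2 (memLp_const x0)
  have hrhs_int : Integrable (fun ω =>
      (h (x ω) - h x0 - ⟪h' x0, x ω - x0⟫) + (1 / 2) * ‖S ω‖ ^ 2 + ⟪S ω, x0⟫) μ :=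
    (hx_D_int.add (hSS_int.const_mul _)).add hSx0_int
  have hB : Integrable (fun ω => (1 / 2 : ℝ) * ‖S ω‖ ^ 2) μ := hSS_int.const_mul _
  have hA : Integrable (fun ω =>
      (h (x ω) - h x0 - ⟪h' x0, x ω - x0⟫) + (1 / 2) * ‖S ω‖ ^ 2) μ := hx_D_int.add hB
  have hmono := integral_mono hlhs_int hrhs_int hpt
  -- compute the RHS integral
  rw [integral_add hA hSx0_int, integral_add hx_D_int hB, integral_const_mul] at hmono
  -- mean of u k is zero
  have humean0 : ∀ k ∈ Finset.Icc 1 K, ∫ ω, u k ω ∂μ = 0 := by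
    intro k hk
    obtain ⟨hk1, hk2⟩ := Finset.mem_Icc.mp hk
    rw [← integral_condExp (F.le k) (f := u k), integral_congr_ae (hu_mean k hk1 hk2)]
    simp
  -- ⟪S, x0⟫ has zero mean
  have hSx0 : ∫ ω, ⟪S ω, x0⟫ ∂μ = 0 := by
    have : (fun ω => ⟪S ω, x0⟫) = fun ω => ∑ k ∈ Finset.Icc 1 K, ⟪x0, u k ω⟫ := by
      funext ω
      rw [real_inner_comm, inner_sum]
    rw [this, integral_finset_sum _ fun k hk =>
      aux_integrable_inner (memLp_const x0) (hu2 k hk)]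
    refine Finset.sum_eq_zero fun k hk => ?_
    rw [integral_inner ((hu2 k hk).integrable one_le_two), humean0 k hk, inner_zero_right]
  -- second moment of S
  have hS_norm : ∫ ω, ‖S ω‖ ^ 2 ∂μ = ∑ k ∈ Finset.Icc 1 K, ∫ ω, ‖u k ω‖ ^ 2 ∂μ := by
    have hexp : (fun ω => ‖S ω‖ ^ 2)
        = fun ω => ∑ j ∈ Finset.Icc 1 K, ∑ k ∈ Finset.Icc 1 K, ⟪u j ω, u k ω⟫ := by
      funext ω
      rw [← real_inner_self_eq_norm_sq]
      simp only [hS_def, sum_inner, inner_sum]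
      exact Finset.sum_comm
    rw [hexp, integral_finset_sum _ fun j hj =>
      integrable_finset_sum _ fun k hk => aux_integrable_inner (hu2 j hj) (hu2 k hk)]
    rw [Finset.sum_congr rfl fun j hj => integral_finset_sum _ fun k hk =>
      aux_integrable_inner (hu2 j hj) (hu2 k hk)]
    have hterm : ∀ j ∈ Finset.Icc 1 K, ∀ k ∈ Finset.Icc 1 K,
        ∫ ω, ⟪u j ω, u k ω⟫ ∂μ = if j = k then ∫ ω, ‖u j ω‖ ^ 2 ∂μ else 0 := by
      intro j hj k hk
      obtain ⟨hj1, hjK⟩ := Finset.mem_Icc.mp hj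
      obtain ⟨hk1, hkK⟩ := Finset.mem_Icc.mp hk
      by_cases hjk : j = k
      · subst hjk
        simp only [if_pos rfl]
        congr 1
        funext ω
        exact real_inner_self_eq_norm_sq _
      · rw [if_neg hjk]
        rcases lt_or_gt_of_ne hjk with hlt | hgt
        · exact aux_cross F hlt (hu_meas j hj1 hjK) (hu2 j hj) (hu2 k hk)
            (hu_mean k hk1 hkK)
        · have : (fun ω => ⟪u j ω, u k ω⟫) = fun ω => ⟪u k ω, u j ω⟫ := by
            funext ω; rw [real_inner_comm]
          rw [this]
          exact aux_cross F hgt (hu_meas k hk1 hkK) (hu2 k hk) (hu2 j hj)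
            (hu_mean j hj1 hjK)
    calc ∑ j ∈ Finset.Icc 1 K, ∑ k ∈ Finset.Icc 1 K, ∫ ω, ⟪u j ω, u k ω⟫ ∂μ
        = ∑ j ∈ Finset.Icc 1 K, ∑ k ∈ Finset.Icc 1 K,
            (if j = k then ∫ ω, ‖u j ω‖ ^ 2 ∂μ else 0) :=
          Finset.sum_congr rfl fun j hj => Finset.sum_congr rfl fun k hk => hterm j hj k hk
      _ = ∑ j ∈ Finset.Icc 1 K, ∫ ω, ‖u j ω‖ ^ 2 ∂μ := by
          refine Finset.sum_congr rfl fun j hj => ?_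
          rw [Finset.sum_ite_eq (Finset.Icc 1 K) j fun _ => ∫ ω, ‖u j ω‖ ^ 2 ∂μ,
            if_pos hj]
  rw [hSx0, hS_norm] at hmono
  linarith
end
end

section
/- Let A ∈ ℝ^{n×d} have no zero row, let ρ_j = ‖A_{j:}‖_∞ = max_{1≤i≤d} |A_{ji}| > 0 for j ∈ {1,…,n}, and define p_j = sqrt(ρ_j) / Σ_{l=1}^n sqrt(ρ_l). Then for all y, ŷ ∈ ℝ^n and z, ẑ ∈ ℝ^d: Σ_{j=1}^n (ρ_j²/p_j³) (y_j − ŷ_j)² + Σ_{j=1}^n (1/p_j³) ( A_{j:}ᵀ(z − ẑ) )² ≤ ‖ρ‖_{1/2} ² ( ‖y − ŷ‖_2² + ‖z − ẑ‖_1² ), where ‖ρ‖_{1/2} = ( Σ_{j=1}^n sqrt(ρ_j) )² and A_{j:} denotes the j-th row of A. -/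
open Finset

noncomputable section

/-- L_{p,q} ≤ ‖ρ‖_{1/2} for the row-based sum decomposition of the matrix-game
operator, with sampling probabilities p_j ∝ √(‖A_{j:}‖_∞).
Here ‖ρ‖_{1/2}² = ((Σ_j √ρ_j)²)² . -/
theorem stmt17 (n d : ℕ) (A : Matrix (Fin n) (Fin d) ℝ)
    (hA : ∀ j, ∃ i, A j i ≠ 0)
    (ρ : Fin n → ℝ) (hρ : ∀ j, IsGreatest (Set.range fun i => |A j i|) (ρ j))
    (hρ_pos : ∀ j, 0 < ρ j)
    (p : Fin n → ℝ) (hp : ∀ j, p j = Real.sqrt (ρ j) / ∑ l, Real.sqrt (ρ l)) :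
    ∀ (y yh : Fin n → ℝ) (z zh : Fin d → ℝ),
      (∑ j, (ρ j) ^ 2 / (p j) ^ 3 * (y j - yh j) ^ 2)
          + ∑ j, (1 / (p j) ^ 3) * (∑ i, A j i * (z i - zh i)) ^ 2
        ≤ ((∑ j, Real.sqrt (ρ j)) ^ 2) ^ 2
            * ((∑ j, (y j - yh j) ^ 2) + (∑ i, |z i - zh i|) ^ 2) := by
  intro y yh z zh
  set S := ∑ l, Real.sqrt (ρ l) with hS
  have hrpos : ∀ j, 0 < Real.sqrt (ρ j) := fun j => Real.sqrt_pos.mpr (hρ_pos j)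
  have hrS : ∀ j : Fin n, Real.sqrt (ρ j) ≤ S := fun j =>
    Finset.single_le_sum (f := fun l => Real.sqrt (ρ l))
      (fun i _ => Real.sqrt_nonneg _) (mem_univ j)
  have hSpos : ∀ j : Fin n, 0 < S := fun j => lt_of_lt_of_le (hrpos j) (hrS j)
  have hsq : ∀ j, Real.sqrt (ρ j) ^ 2 = ρ j := fun j => Real.sq_sqrt (hρ_pos j).le
  -- coefficient computations
  have hcoef1 : ∀ j, ρ j ^ 2 / p j ^ 3 = Real.sqrt (ρ j) * S ^ 3 := by
    intro j
    rw [hp, ← hsq j, Real.sqrt_sq (hrpos j).le]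
    have h1 : Real.sqrt (ρ j) ≠ 0 := (hrpos j).ne'
    have h2 : S ≠ 0 := (hSpos j).ne'
    field_simp
  have hcoef2 : ∀ j, 1 / p j ^ 3 = S ^ 3 / Real.sqrt (ρ j) ^ 3 := by
    intro j
    rw [hp, div_pow, one_div, inv_div]
  -- Hölder per row
  have hholder : ∀ j, (∑ i, A j i * (z i - zh i)) ^ 2 ≤ ρ j ^ 2 * (∑ i, |z i - zh i|) ^ 2 := by
    intro j
    have habs : |∑ i, A j i * (z i - zh i)| ≤ ρ j * ∑ i, |z i - zh i| := by
      calc |∑ i, A j i * (z i - zh i)| ≤ ∑ i, |A j i * (z i - zh i)| :=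
            Finset.abs_sum_le_sum_abs _ _
        _ ≤ ∑ i, ρ j * |z i - zh i| := by
            refine Finset.sum_le_sum fun i _ => ?_
            rw [abs_mul]
            exact mul_le_mul_of_nonneg_right ((hρ j).2 ⟨i, rfl⟩) (abs_nonneg _)
        _ = ρ j * ∑ i, |z i - zh i| := by rw [Finset.mul_sum]
    calc (∑ i, A j i * (z i - zh i)) ^ 2 = |∑ i, A j i * (z i - zh i)| ^ 2 := (sq_abs _).symm
      _ ≤ (ρ j * ∑ i, |z i - zh i|) ^ 2 :=
          pow_le_pow_left₀ (abs_nonneg _) habs 2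
      _ = ρ j ^ 2 * (∑ i, |z i - zh i|) ^ 2 := by ring
  -- first sum bound
  have h1 : ∑ j, ρ j ^ 2 / p j ^ 3 * (y j - yh j) ^ 2
      ≤ (S ^ 2) ^ 2 * ∑ j, (y j - yh j) ^ 2 := by
    rw [Finset.mul_sum]
    refine Finset.sum_le_sum fun j _ => ?_
    rw [hcoef1 j]
    have : Real.sqrt (ρ j) * S ^ 3 ≤ (S ^ 2) ^ 2 := by
      have := mul_le_mul_of_nonneg_right (hrS j) (pow_nonneg (hSpos j).le 3)
      calc Real.sqrt (ρ j) * S ^ 3 ≤ S * S ^ 3 := this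
        _ = (S ^ 2) ^ 2 := by ring
    exact mul_le_mul_of_nonneg_right this (sq_nonneg _)
  -- second sum bound
  have h2 : ∑ j, (1 / p j ^ 3) * (∑ i, A j i * (z i - zh i)) ^ 2
      ≤ (S ^ 2) ^ 2 * (∑ i, |z i - zh i|) ^ 2 := by
    have hstep : ∀ j : Fin n, (1 / p j ^ 3) * (∑ i, A j i * (z i - zh i)) ^ 2
        ≤ Real.sqrt (ρ j) * S ^ 3 * (∑ i, |z i - zh i|) ^ 2 := by
      intro j
      rw [hcoef2 j]
      have hpos : 0 < S ^ 3 / Real.sqrt (ρ j) ^ 3 :=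
        div_pos (pow_pos (hSpos j) 3) (pow_pos (hrpos j) 3)
      calc S ^ 3 / Real.sqrt (ρ j) ^ 3 * (∑ i, A j i * (z i - zh i)) ^ 2
          ≤ S ^ 3 / Real.sqrt (ρ j) ^ 3 * (ρ j ^ 2 * (∑ i, |z i - zh i|) ^ 2) :=
            mul_le_mul_of_nonneg_left (hholder j) hpos.le
        _ = Real.sqrt (ρ j) * S ^ 3 * (∑ i, |z i - zh i|) ^ 2 := by
            rw [← hsq j, Real.sqrt_sq (hrpos j).le]
            have h1 : Real.sqrt (ρ j) ≠ 0 := (hrpos j).ne'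
            field_simp
    calc ∑ j, (1 / p j ^ 3) * (∑ i, A j i * (z i - zh i)) ^ 2
        ≤ ∑ j, Real.sqrt (ρ j) * S ^ 3 * (∑ i, |z i - zh i|) ^ 2 :=
          Finset.sum_le_sum fun j _ => hstep j
      _ = (∑ j, Real.sqrt (ρ j)) * S ^ 3 * (∑ i, |z i - zh i|) ^ 2 := by
          rw [← Finset.sum_mul, ← Finset.sum_mul]
      _ = (S ^ 2) ^ 2 * (∑ i, |z i - zh i|) ^ 2 := by rw [← hS]; ring
  calc (∑ j, ρ j ^ 2 / p j ^ 3 * (y j - yh j) ^ 2)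
        + ∑ j, (1 / p j ^ 3) * (∑ i, A j i * (z i - zh i)) ^ 2
      ≤ (S ^ 2) ^ 2 * ∑ j, (y j - yh j) ^ 2 + (S ^ 2) ^ 2 * (∑ i, |z i - zh i|) ^ 2 :=
        add_le_add h1 h2
    _ = (S ^ 2) ^ 2 * ((∑ j, (y j - yh j) ^ 2) + (∑ i, |z i - zh i|) ^ 2) := by ring

end
end

section
/- Let A ∈ ℝ^{n×d} have no zero column, let σ_j = ‖A_{:j}‖_∞ = max_{1≤i≤n} |A_{ij}| > 0 for j ∈ {1,…,d}, and define p_j = σ_j^{2/5} / Σ_{l=1}^d σ_l^{2/5}. Then for all w ∈ ℝ^n and s ∈ ℝ^d: Σ_{j=1}^d (1/p_j⁴) ( A_{:j}ᵀ w )² + Σ_{j=1}^d (σ_j²/p_j³) s_j² ≤ ‖σ‖_{2/5}² ( ‖w‖_1² + Σ_{j=1}^d p_j s_j² ), where ‖σ‖_{2/5} = ( Σ_{j=1}^d σ_j^{2/5} )^{5/2} and A_{:j} denotes the j-th column of A. -/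
open Finset

noncomputable section

/-- L_{p,q} ≤ ‖σ‖_{2/5} for the box-simplex (ℓ∞-regression) operator decomposition,
with sampling probabilities p_j ∝ ‖A_{:j}‖_∞^{2/5} and the weighted primal norm
‖s‖_p² = Σ_j p_j s_j².  Here ‖σ‖_{2/5}² = (Σ_l σ_l^{2/5})⁵. -/
theorem stmt18 (n d : ℕ) (A : Matrix (Fin n) (Fin d) ℝ)
    (hA : ∀ j, ∃ i, A i j ≠ 0)
    (σ : Fin d → ℝ) (hσ : ∀ j, IsGreatest (Set.range fun i => |A i j|) (σ j))
    (hσ_pos : ∀ j, 0 < σ j)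
    (p : Fin d → ℝ) (hp : ∀ j, p j = (σ j) ^ ((2 : ℝ) / 5) / ∑ l, (σ l) ^ ((2 : ℝ) / 5)) :
    ∀ (w : Fin n → ℝ) (s : Fin d → ℝ),
      (∑ j, (1 / (p j) ^ 4) * (∑ i, A i j * w i) ^ 2)
          + ∑ j, (σ j) ^ 2 / (p j) ^ 3 * (s j) ^ 2
        ≤ ((∑ l, (σ l) ^ ((2 : ℝ) / 5)) ^ ((5 : ℝ) / 2)) ^ 2
            * ((∑ i, |w i|) ^ 2 + ∑ j, p j * (s j) ^ 2) := by
  intro w s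
  set S : ℝ := ∑ l, (σ l) ^ ((2 : ℝ) / 5) with hSdef
  rcases Nat.eq_zero_or_pos d with hd | hd
  · subst hd
    simp [Real.zero_rpow, hSdef, show ((5:ℝ)/2) ≠ 0 by norm_num]
  · -- main case
    have hσr_pos : ∀ j : Fin d, 0 < σ j ^ ((2:ℝ)/5) :=
      fun j => Real.rpow_pos_of_pos (hσ_pos j) _
    have hSj : ∀ j : Fin d, σ j ^ ((2:ℝ)/5) ≤ S := fun j =>
      Finset.single_le_sum (fun l _ => (hσr_pos l).le) (mem_univ j)
    have hS0 : 0 < S := lt_of_lt_of_le (hσr_pos ⟨0, hd⟩) (hSj ⟨0, hd⟩)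
    have hp_pos : ∀ j, 0 < p j := fun j => by
      rw [hp j]; exact div_pos (hσr_pos j) hS0
    set T : ℝ := ∑ i, |w i| with hT
    have hT0 : 0 ≤ T := Finset.sum_nonneg fun i _ => abs_nonneg _
    have hcol : ∀ j, (∑ i, A i j * w i) ^ 2 ≤ σ j ^ 2 * T ^ 2 := by
      intro j
      have habs : |∑ i, A i j * w i| ≤ σ j * T := by
        calc |∑ i, A i j * w i| ≤ ∑ i, |A i j * w i| :=
              Finset.abs_sum_le_sum_abs _ _
          _ = ∑ i, |A i j| * |w i| := by simp [abs_mul]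
          _ ≤ ∑ i, σ j * |w i| := by
              refine Finset.sum_le_sum fun i _ => ?_
              exact mul_le_mul_of_nonneg_right ((hσ j).2 (Set.mem_range_self i))
                (abs_nonneg _)
          _ = σ j * T := by rw [hT, Finset.mul_sum]
      calc (∑ i, A i j * w i) ^ 2 = |∑ i, A i j * w i| ^ 2 := (sq_abs _).symm
        _ ≤ (σ j * T) ^ 2 := by
            exact pow_le_pow_left₀ (abs_nonneg _) habs 2
        _ = σ j ^ 2 * T ^ 2 := by ring
    -- rpow algebra
    have e1 : ∀ j : Fin d, (σ j ^ ((2:ℝ)/5)) ^ (4:ℕ) = σ j ^ ((8:ℝ)/5) := by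
      intro j
      rw [← Real.rpow_natCast (σ j ^ ((2:ℝ)/5)) 4, ← Real.rpow_mul (hσ_pos j).le]
      norm_num
    have e1' : ∀ j : Fin d, (σ j ^ ((2:ℝ)/5)) ^ (3:ℕ) = σ j ^ ((6:ℝ)/5) := by
      intro j
      rw [← Real.rpow_natCast (σ j ^ ((2:ℝ)/5)) 3, ← Real.rpow_mul (hσ_pos j).le]
      norm_num
    have e2 : ∀ j : Fin d, σ j ^ (2:ℕ) = σ j ^ ((8:ℝ)/5) * σ j ^ ((2:ℝ)/5) := by
      intro j
      rw [← Real.rpow_add (hσ_pos j), ← Real.rpow_natCast (σ j) 2]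
      norm_num
    have e2' : ∀ j : Fin d, σ j ^ (2:ℕ) = σ j ^ ((6:ℝ)/5) * σ j ^ ((4:ℝ)/5) := by
      intro j
      rw [← Real.rpow_add (hσ_pos j), ← Real.rpow_natCast (σ j) 2]
      norm_num
    have e4 : ∀ j : Fin d, σ j ^ ((4:ℝ)/5) = σ j ^ ((2:ℝ)/5) * σ j ^ ((2:ℝ)/5) := by
      intro j
      rw [← Real.rpow_add (hσ_pos j)]
      norm_num
    have key1 : ∀ j : Fin d, (1 / (p j) ^ 4) * (∑ i, A i j * w i) ^ 2
        ≤ S ^ 4 * σ j ^ ((2:ℝ)/5) * T ^ 2 := by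
      intro j
      have hinv : 0 ≤ 1 / (p j) ^ 4 := by positivity
      calc (1 / (p j) ^ 4) * (∑ i, A i j * w i) ^ 2
          ≤ (1 / (p j) ^ 4) * (σ j ^ 2 * T ^ 2) :=
            mul_le_mul_of_nonneg_left (hcol j) hinv
        _ = S ^ 4 * σ j ^ ((2:ℝ)/5) * T ^ 2 := by
            rw [hp j]
            have h8 : σ j ^ ((8:ℝ)/5) ≠ 0 := (Real.rpow_pos_of_pos (hσ_pos j) _).ne'
            rw [div_pow, one_div_div, e1 j, e2 j, div_mul_eq_mul_div, div_eq_iff h8]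
            ring
    have key2 : ∀ j : Fin d, σ j ^ 2 / (p j) ^ 3 * (s j) ^ 2
        ≤ S ^ 5 * (p j * (s j) ^ 2) := by
      intro j
      have h6 : (0:ℝ) < σ j ^ ((6:ℝ)/5) := Real.rpow_pos_of_pos (hσ_pos j) _
      have hA' : σ j ^ 2 / (p j) ^ 3 = S ^ 3 * σ j ^ ((4:ℝ)/5) := by
        rw [hp j]
        rw [div_pow, div_div_eq_mul_div, e1' j, e2' j, div_eq_iff h6.ne']
        ring
      have hB : S ^ 5 * p j = S ^ 4 * σ j ^ ((2:ℝ)/5) := by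
        rw [hp j]
        field_simp
      have hstep : S ^ 3 * σ j ^ ((4:ℝ)/5) ≤ S ^ 4 * σ j ^ ((2:ℝ)/5) := by
        rw [e4 j]
        have h := mul_le_mul_of_nonneg_right (hSj j)
          (mul_nonneg (pow_pos hS0 3).le (hσr_pos j).le)
        nlinarith [h]
      calc σ j ^ 2 / (p j) ^ 3 * (s j) ^ 2 = S ^ 3 * σ j ^ ((4:ℝ)/5) * (s j) ^ 2 := by
            rw [hA']
        _ ≤ S ^ 4 * σ j ^ ((2:ℝ)/5) * (s j) ^ 2 :=
            mul_le_mul_of_nonneg_right hstep (sq_nonneg _)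
        _ = S ^ 5 * (p j * (s j) ^ 2) := by rw [← mul_assoc, hB]
    have hR : ((S) ^ ((5:ℝ)/2)) ^ 2 = S ^ (5:ℕ) := by
      rw [← Real.rpow_natCast (S ^ ((5:ℝ)/2)) 2, ← Real.rpow_mul hS0.le,
        ← Real.rpow_natCast S 5]
      norm_num
    calc (∑ j, (1 / (p j) ^ 4) * (∑ i, A i j * w i) ^ 2)
          + ∑ j, (σ j) ^ 2 / (p j) ^ 3 * (s j) ^ 2
        ≤ (∑ j, S ^ 4 * σ j ^ ((2:ℝ)/5) * T ^ 2)
          + ∑ j, S ^ 5 * (p j * (s j) ^ 2) :=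
          add_le_add (Finset.sum_le_sum fun j _ => key1 j)
            (Finset.sum_le_sum fun j _ => key2 j)
      _ = S ^ 5 * T ^ 2 + S ^ 5 * ∑ j, p j * (s j) ^ 2 := by
          rw [← Finset.mul_sum]
          congr 1
          have : (∑ j, S ^ 4 * σ j ^ ((2:ℝ)/5) * T ^ 2)
              = S ^ 4 * (∑ j, σ j ^ ((2:ℝ)/5)) * T ^ 2 := by
            rw [← Finset.sum_mul, ← Finset.mul_sum]
          rw [this, ← hSdef]
          ring
      _ = ((S) ^ ((5:ℝ)/2)) ^ 2 * (T ^ 2 + ∑ j, p j * (s j) ^ 2) := by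
          rw [hR]; ring

end
end
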